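/- arXiv:1412.3392 — 3 statements merged into one kernel-verified Lean document; each statement's English description precedes it below -/
import Mathlib

section
/- Let n ≥ 1, s ∈ (0,1) and p ∈ [1,∞) be such that sp < n, and let q ∈ [p, p_s^*] where p_s^* = np/(n−sp). Then there exists a constant C > 0 such that for every u ∈ L^p(ℝ^n) with finite Gagliardo seminorm [u]_{s,p}, one has u ∈ L^q(ℝ^n) and ‖u‖_{L^q(ℝ^n)} ≤ C (‖u‖_{L^p(ℝ^n)}^p + [u]_{s,p}^p)^{1/p}. -/
open MeasureTheory Real Filter
open scoped ENNReal NNReal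

noncomputable section

/-- The `p`-th power of the Gagliardo seminorm, as an extended nonnegative real. -/
def gagliardoP (n : ℕ) (s p : ℝ) (u : EuclideanSpace ℝ (Fin n) → ℝ) : ℝ≥0∞ :=
  ∫⁻ x, ∫⁻ y, ENNReal.ofReal (|u x - u y| ^ p / ‖x - y‖ ^ ((n : ℝ) + s * p))

/-- Membership in the fractional Sobolev space with potential `X^s`. -/
def MemXs (n : ℕ) (s p : ℝ) (V : EuclideanSpace ℝ (Fin n) → ℝ)
    (u : EuclideanSpace ℝ (Fin n) → ℝ) : Prop :=
  Measurable u ∧ MemLp u (ENNReal.ofReal p) ∧ gagliardoP n s p u < ⊤ ∧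
    Integrable (fun x => V x * |u x| ^ p)

/-- The norm of `X^s`. -/
def normXs (n : ℕ) (s p : ℝ) (V : EuclideanSpace ℝ (Fin n) → ℝ)
    (u : EuclideanSpace ℝ (Fin n) → ℝ) : ℝ :=
  ((gagliardoP n s p u).toReal + ∫ x, V x * |u x| ^ p) ^ (1 / p)

/-- The pairing `⟨A(u), v⟩` associated with the fractional `p`-Laplacian plus potential. -/
def Apair (n : ℕ) (s p : ℝ) (V : EuclideanSpace ℝ (Fin n) → ℝ)
    (u v : EuclideanSpace ℝ (Fin n) → ℝ) : ℝ :=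
  (∫ x, ∫ y, |u x - u y| ^ (p - 2) * (u x - u y) * (v x - v y) / ‖x - y‖ ^ ((n : ℝ) + s * p)) +
    ∫ x, V x * |u x| ^ (p - 2) * u x * v x

/-- The primitive `F(x,t) = ∫_0^t f(x,τ) dτ`. -/
def Fprim (n : ℕ) (f : EuclideanSpace ℝ (Fin n) → ℝ → ℝ)
    (x : EuclideanSpace ℝ (Fin n)) (t : ℝ) : ℝ :=
  ∫ τ in (0:ℝ)..t, f x τ

/-- The energy functional `I`. -/
def energy (n : ℕ) (s p : ℝ) (V : EuclideanSpace ℝ (Fin n) → ℝ)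
    (f : EuclideanSpace ℝ (Fin n) → ℝ → ℝ) (u : EuclideanSpace ℝ (Fin n) → ℝ) : ℝ :=
  (1 / p) * normXs n s p V u ^ p - ∫ x, Fprim n f x (u x)

/-- Condition (V) on the potential. -/
def CondV (n : ℕ) (V : EuclideanSpace ℝ (Fin n) → ℝ) : Prop :=
  Continuous V ∧ (∃ V₀ > (0:ℝ), ∀ x, V₀ ≤ V x) ∧
    ∀ M > (0:ℝ), volume {x : EuclideanSpace ℝ (Fin n) | V x ≤ M} < ⊤

/-- Condition (f1): continuity, growth strictly below `|t|^{q-1}`, and `p`-superlinearity,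
both uniformly in `x`. -/
def CondF1 (n : ℕ) (p q : ℝ) (f : EuclideanSpace ℝ (Fin n) → ℝ → ℝ) : Prop :=
  Continuous (Function.uncurry f) ∧
    (∀ ε > (0:ℝ), ∃ T > (0:ℝ), ∀ x t, T ≤ |t| → |f x t| ≤ ε * |t| ^ (q - 1)) ∧
    (∀ L : ℝ, ∃ T > (0:ℝ), ∀ x t, T ≤ |t| → L * |t| ^ p ≤ f x t * t)

/-- Condition (f2): `f(x,t) = o(|t|^{p-2} t)` as `t → 0`, uniformly in `x`. -/
def CondF2 (n : ℕ) (p : ℝ) (f : EuclideanSpace ℝ (Fin n) → ℝ → ℝ) : Prop :=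
  ∀ ε > (0:ℝ), ∃ δ > (0:ℝ), ∀ x t, t ≠ 0 → |t| < δ → |f x t| ≤ ε * |t| ^ (p - 1)

/-- The function `𝓕(x,t) = f(x,t) t − p F(x,t)`. -/
def calF (n : ℕ) (p : ℝ) (f : EuclideanSpace ℝ (Fin n) → ℝ → ℝ)
    (x : EuclideanSpace ℝ (Fin n)) (t : ℝ) : ℝ :=
  f x t * t - p * Fprim n f x t

/-- Condition (f3). -/
def CondF3 (n : ℕ) (p : ℝ) (f : EuclideanSpace ℝ (Fin n) → ℝ → ℝ) : Prop :=
  ∃ θ : ℝ, 1 ≤ θ ∧ ∀ x t, ∀ σ ∈ Set.Icc (0:ℝ) 1,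
    calF n p f x (σ * t) ≤ θ * calF n p f x t

end


section FracSobAuxSection
open MeasureTheory Real Set Metric
open scoped ENNReal NNReal

namespace FracSobAux

noncomputable def kap (n : ℕ) : ℝ := (volume (Metric.ball (0 : EuclideanSpace ℝ (Fin n)) 1)).toReal

lemma kap_pos (n : ℕ) : 0 < kap n :=
  ENNReal.toReal_pos (measure_ball_pos volume _ one_pos).ne' measure_ball_lt_top.ne

lemma vol_ball {n : ℕ} (x : EuclideanSpace ℝ (Fin n)) {r : ℝ} (hr : 0 < r) :
    volume (Metric.ball x r) = ENNReal.ofReal (r ^ (n : ℝ) * kap n) := by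
  rw [Measure.addHaar_ball_of_pos volume x hr,
    show (volume (Metric.ball (0:EuclideanSpace ℝ (Fin n)) 1)) = ENNReal.ofReal (kap n) from
      (ENNReal.ofReal_toReal measure_ball_lt_top.ne).symm,
    ← ENNReal.ofReal_mul (by positivity), finrank_euclideanSpace_fin, ← Real.rpow_natCast r n]

lemma vol_annulus {n : ℕ} (x : EuclideanSpace ℝ (Fin n)) {r : ℝ} (hr : 0 < r) :
    volume (Metric.ball x (2*r) \ Metric.ball x r)
      = ENNReal.ofReal ((((2:ℝ) ^ (n:ℝ) - 1)) * (r ^ (n:ℝ) * kap n)) := by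
  rw [measure_diff (ball_subset_ball (by linarith)) measurableSet_ball.nullMeasurableSet
      measure_ball_lt_top.ne, vol_ball x (by linarith), vol_ball x hr,
    ← ENNReal.ofReal_sub _ (by have := kap_pos n; positivity)]
  congr 1
  rw [Real.mul_rpow (by norm_num) hr.le]
  have h1 : (1:ℝ) ≤ (2:ℝ) ^ (n:ℝ) := Real.one_le_rpow one_le_two (by positivity)
  ring

end FracSobAux

namespace FracSobAux

noncomputable def cone (n : ℕ) : ℝ := 2 / ((((2:ℝ) ^ (n:ℝ)) - 1) * kap n)

noncomputable def cthree (n : ℕ) (s p : ℝ) : ℝ :=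
  2 ^ (-((n:ℝ) + s*p)) * cone n ^ (-(((n:ℝ) + s*p)/n))

lemma cone_pos {n : ℕ} (hn : 1 ≤ n) : 0 < cone n := by
  have h2 : (1:ℝ) < (2:ℝ) ^ (n:ℝ) := by
    apply Real.one_lt_rpow one_lt_two
    exact_mod_cast Nat.pos_of_ne_zero (by omega)
  have hk := kap_pos n
  exact div_pos two_pos (mul_pos (by linarith) hk)

lemma cthree_pos {n : ℕ} (hn : 1 ≤ n) (s p : ℝ) : 0 < cthree n s p := by
  have h1 := cone_pos hn
  exact mul_pos (Real.rpow_pos_of_pos two_pos _) (Real.rpow_pos_of_pos h1 _)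

lemma inner_bound {n : ℕ} {s p : ℝ} (hn : 1 ≤ n) (hs0 : 0 < s) (hp : 1 ≤ p)
    (u : EuclideanSpace ℝ (Fin n) → ℝ) {F : Set (EuclideanSpace ℝ (Fin n))}
    (hFm : MeasurableSet F) (hF0 : 0 < volume F) (hFt : volume F < ⊤)
    {lb : ℝ} (hlb : 0 < lb) (x : EuclideanSpace ℝ (Fin n))
    (hx : ∀ y, y ∉ F → lb ≤ |u x - u y|) :
    ENNReal.ofReal (lb ^ p * cthree n s p * (volume F).toReal ^ (-(s*p/n))) ≤
      ∫⁻ y, ENNReal.ofReal (|u x - u y| ^ p / ‖x - y‖ ^ ((n:ℝ) + s * p)) := by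
  have hnR : (0:ℝ) < (n:ℝ) := by exact_mod_cast Nat.pos_of_ne_zero (by omega)
  have hsp0 : (0:ℝ) < s * p := mul_pos hs0 (by linarith)
  set α : ℝ := (n:ℝ) + s * p with hα
  have hα0 : 0 < α := by rw [hα]; linarith
  set v : ℝ := (volume F).toReal with hv
  have hv0 : 0 < v := ENNReal.toReal_pos hF0.ne' hFt.ne
  have hvF : volume F = ENNReal.ofReal v := (ENNReal.ofReal_toReal hFt.ne).symm
  have hc1 : 0 < cone n := cone_pos hn
  set R : ℝ := (cone n * v) ^ ((n:ℝ)⁻¹) with hR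
  have hR0 : 0 < R := Real.rpow_pos_of_pos (by positivity) _
  have hRn : R ^ (n:ℝ) = cone n * v := by
    rw [hR, ← Real.rpow_mul (by positivity), inv_mul_cancel₀ hnR.ne', Real.rpow_one]
  set W : Set (EuclideanSpace ℝ (Fin n)) := (Metric.ball x (2*R) \ Metric.ball x R) \ F with hW
  have hWm : MeasurableSet W := (measurableSet_ball.diff measurableSet_ball).diff hFm
  have hannvol : volume (Metric.ball x (2*R) \ Metric.ball x R) = 2 * ENNReal.ofReal v := by
    rw [vol_annulus x hR0, hRn]
    rw [show (((2:ℝ) ^ (n:ℝ)) - 1) * (cone n * v * kap n) = 2 * v by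
      have hk := kap_pos n
      have h2 : (1:ℝ) < (2:ℝ) ^ (n:ℝ) := by
        apply Real.one_lt_rpow one_lt_two
        exact_mod_cast Nat.pos_of_ne_zero (by omega)
      have h2' : (0:ℝ) < 2 ^ (n:ℝ) - 1 := by linarith
      simp only [cone]
      have h2'' : (0:ℝ) < 2^(n:ℕ) - 1 := by
        have : (1:ℝ) < 2^(n:ℕ) := one_lt_pow₀ one_lt_two (by omega)
        linarith
      field_simp [h2'.ne', hk.ne']]
    rw [ENNReal.ofReal_mul (by norm_num)]
    norm_num
  have hWvol : ENNReal.ofReal v ≤ volume W := by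
    have h1 : volume (Metric.ball x (2*R) \ Metric.ball x R) ≤ volume W + volume F := by
      refine le_trans (measure_mono ?_) (measure_union_le _ _)
      intro y hy
      by_cases hyF : y ∈ F
      · exact Or.inr hyF
      · exact Or.inl ⟨hy, hyF⟩
    rw [hannvol, hvF, two_mul] at h1
    exact ENNReal.le_of_add_le_add_right (by simp) h1
  have h2R : ((2:ℝ)*R) ^ α = 2 ^ α * (cone n ^ (α / (n:ℝ)) * v ^ (α / (n:ℝ))) := by
    rw [Real.mul_rpow (by norm_num) hR0.le]
    congr 1
    rw [hR, ← Real.rpow_mul (by positivity), inv_mul_eq_div, Real.mul_rpow hc1.le hv0.le]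
  have hpt : ∀ y ∈ W, ENNReal.ofReal (lb ^ p / (2*R) ^ α)
      ≤ ENNReal.ofReal (|u x - u y| ^ p / ‖x - y‖ ^ α) := by
    intro y hy
    obtain ⟨⟨hy2R, hyR⟩, hyF⟩ := hy
    have hxy : R ≤ ‖x - y‖ := by
      rw [← dist_eq_norm, dist_comm]
      simpa [Metric.mem_ball] using hyR
    have hxy2 : ‖x - y‖ ≤ 2*R := by
      rw [← dist_eq_norm, dist_comm]
      exact le_of_lt (by simpa [Metric.mem_ball] using hy2R)
    apply ENNReal.ofReal_le_ofReal
    apply div_le_div₀ (by positivity) (Real.rpow_le_rpow hlb.le (hx y hyF) (by linarith))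
      (Real.rpow_pos_of_pos (lt_of_lt_of_le hR0 hxy) α)
      (Real.rpow_le_rpow (by linarith [hR0]) hxy2 hα0.le)
  calc ENNReal.ofReal (lb ^ p * cthree n s p * v ^ (-(s*p/n)))
      = ENNReal.ofReal (lb ^ p / (2*R) ^ α) * ENNReal.ofReal v := by
        rw [← ENNReal.ofReal_mul (by positivity)]
        congr 1
        rw [show lb ^ p / (2*R) ^ α = lb ^ p * ((2*R) ^ α)⁻¹ from div_eq_mul_inv _ _,
          h2R, mul_inv, mul_inv,
          ← Real.rpow_neg (by norm_num : (0:ℝ) ≤ 2), ← Real.rpow_neg hc1.le,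
          ← Real.rpow_neg hv0.le]
        simp only [cthree, ← hα]
        have hvv : v ^ (-(α/(n:ℝ))) * v = v ^ (-(s*p/(n:ℝ))) := by
          nth_rewrite 2 [← Real.rpow_one v]
          rw [← Real.rpow_add hv0]
          congr 1
          rw [hα]
          field_simp
          ring
        linear_combination (-(lb ^ p * 2 ^ (-α) * cone n ^ (-(α/(n:ℝ))))) * hvv
    _ ≤ ENNReal.ofReal (lb ^ p / (2*R) ^ α) * volume W := mul_le_mul_right hWvol _
    _ = ∫⁻ y in W, ENNReal.ofReal (lb ^ p / (2*R) ^ α) := (setLIntegral_const _ _).symm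
    _ ≤ ∫⁻ y in W, ENNReal.ofReal (|u x - u y| ^ p / ‖x - y‖ ^ α) :=
        setLIntegral_mono' hWm hpt
    _ ≤ _ := setLIntegral_le_lintegral _ _

end FracSobAux

namespace FracSobAux

lemma cheb {n : ℕ} {p : ℝ} (hp : 1 ≤ p) {u : EuclideanSpace ℝ (Fin n) → ℝ} (hu : Measurable u)
    {lam : ℝ} (hlam : 0 < lam) :
    ENNReal.ofReal (lam ^ p) * volume {x | lam ≤ |u x|} ≤ ∫⁻ x, ENNReal.ofReal (|u x| ^ p) := by
  have hmeas : AEMeasurable (fun x => ENNReal.ofReal (|u x| ^ p)) volume := by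
    apply Measurable.aemeasurable; measurability
  refine le_trans ?_ (mul_meas_ge_le_lintegral₀ hmeas (ENNReal.ofReal (lam ^ p)))
  refine mul_le_mul_right (measure_mono ?_) _
  intro x hx
  exact ENNReal.ofReal_le_ofReal (Real.rpow_le_rpow hlam.le hx (by linarith))

lemma rec_bound {θ : ℝ} (hθ0 : 0 < θ) (hθ1 : θ < 1) (b : ℕ → ℝ≥0∞) (A : ℝ≥0∞)
    (hrec : ∀ j, b (j+1) ≤ A * b j ^ θ) :
    ∀ j, b j ≤ max (b 0) (A ^ (1/(1-θ))) := by
  set B := max (b 0) (A ^ (1/(1-θ))) with hB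
  have key : A * B ^ θ ≤ B := by
    rcases eq_or_ne B ⊤ with h | hBt
    · simp [h]
    rcases eq_or_ne B 0 with h0 | hB0
    · have hA0 : A ^ (1/(1-θ)) = 0 := le_antisymm (h0 ▸ le_max_right _ _) zero_le
      have hA : A = 0 := by
        rcases ENNReal.rpow_eq_zero_iff.mp hA0 with ⟨h,_⟩|⟨_,hneg⟩
        · exact h
        · exfalso
          have : (0:ℝ) < 1/(1-θ) := by
            have : (0:ℝ) < 1-θ := by linarith
            positivity
          linarith
      simp [hA, h0]
    · have hA : A ≤ B ^ (1-θ) := by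
        have h1 : A ^ (1/(1-θ)) ≤ B := le_max_right _ _
        have h2 := ENNReal.rpow_le_rpow h1 (le_of_lt (by linarith : (0:ℝ) < 1-θ))
        rwa [← ENNReal.rpow_mul, one_div, inv_mul_cancel₀ (by linarith : (1:ℝ)-θ ≠ 0),
          ENNReal.rpow_one] at h2
      calc A * B ^ θ ≤ B ^ (1-θ) * B ^ θ := mul_le_mul_left hA _
        _ = B := by
          rw [← ENNReal.rpow_add _ _ hB0 hBt, show (1:ℝ)-θ+θ = 1 by ring, ENNReal.rpow_one]
  intro j
  induction j with
  | zero => exact le_max_left _ _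
  | succ j ih =>
      exact le_trans (hrec j)
        (le_trans (mul_le_mul_right (ENNReal.rpow_le_rpow ih hθ0.le) A) key)

lemma lint_scale {n : ℕ} (u : EuclideanSpace ℝ (Fin n) → ℝ) {c r : ℝ} (hc : 0 ≤ c) :
    ∫⁻ x, ENNReal.ofReal (|c * u x| ^ r)
      = ENNReal.ofReal (c ^ r) * ∫⁻ x, ENNReal.ofReal (|u x| ^ r) := by
  rw [← lintegral_const_mul' _ _ ENNReal.ofReal_ne_top]
  congr 1; funext x
  rw [abs_mul, abs_of_nonneg hc, Real.mul_rpow hc (abs_nonneg _),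
    ENNReal.ofReal_mul (Real.rpow_nonneg hc _)]

end FracSobAux

namespace FracSobAux

lemma core {n : ℕ} {s p q : ℝ} (hn : 1 ≤ n) (hs0 : 0 < s) (hs1 : s < 1) (hp : 1 ≤ p)
    (hsp : s * p < n) (hq1 : p ≤ q) (hq2 : q ≤ n * p / (n - s * p)) :
    ∃ Cc : ℝ≥0∞, Cc ≠ ⊤ ∧ ∀ u : EuclideanSpace ℝ (Fin n) → ℝ, Measurable u →
      (∫⁻ x, ENNReal.ofReal (|u x| ^ p)) ≤ 1 → gagliardoP n s p u ≤ 1 →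
      (∫⁻ x, ENNReal.ofReal (|u x| ^ q)) ≤ Cc := by
  have hnR : (0:ℝ) < (n:ℝ) := by exact_mod_cast Nat.pos_of_ne_zero (by omega)
  have hsp0 : (0:ℝ) < s * p := mul_pos hs0 (by linarith)
  have hnsp : (0:ℝ) < (n:ℝ) - s * p := by linarith
  set θ : ℝ := s * p / (n:ℝ) with hθdef
  have hθ0 : 0 < θ := by rw [hθdef]; positivity
  have hθ1 : θ < 1 := by rw [hθdef, div_lt_one hnR]; linarith
  set pc : ℝ := (n:ℝ) * p / ((n:ℝ) - s * p) with hpcdef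
  have hpc_pos : 0 < pc := by rw [hpcdef]; positivity
  have hppc : p ≤ pc := by
    rw [hpcdef, le_div_iff₀ hnsp]
    nlinarith
  have hpcθ : pc * θ = pc - p := by
    rw [hpcdef, hθdef]
    have h := hnsp.ne'; have h2 := hnR.ne'
    rw [div_mul_div_comm, eq_sub_iff_add_eq, div_add' _ _ _ (mul_ne_zero h h2),
      div_eq_div_iff (mul_ne_zero h h2) h]
    ring
  have hc3 : 0 < cthree n s p := cthree_pos hn s p
  set c3 : ℝ := cthree n s p with hc3def
  set A0 : ℝ≥0∞ := ENNReal.ofReal (2 ^ (pc + p) / c3) with hA0def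
  set B0 : ℝ≥0∞ := max (ENNReal.ofReal (2 ^ p)) (A0 ^ (1/(1-θ))) with hB0def
  have hA0top : A0 ≠ ⊤ := ENNReal.ofReal_ne_top
  have hB0top : B0 ≠ ⊤ := by
    rw [hB0def]
    apply (max_lt (ENNReal.ofReal_lt_top)
      (ENNReal.rpow_lt_top_of_nonneg (le_of_lt (div_pos one_pos (by linarith))) hA0top)).ne
  refine ⟨A0 * B0 ^ θ + 1, ?_, ?_⟩
  · exact ENNReal.add_ne_top.mpr ⟨ENNReal.mul_ne_top hA0top
      (ENNReal.rpow_ne_top_of_nonneg hθ0.le hB0top), ENNReal.one_ne_top⟩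
  intro u hu hP hD
  -- levels
  set lam : ℕ → ℝ := fun j => (2:ℝ) ^ ((j:ℝ) - 1) with hlamdef
  have hlam_pos : ∀ j, 0 < lam j := fun j => Real.rpow_pos_of_pos two_pos _
  have hlame : ∀ (k : ℕ) (e : ℝ), lam k ^ e = (2:ℝ) ^ (((k:ℝ)-1)*e) := fun k e => by
    rw [hlamdef, ← Real.rpow_mul (by norm_num)]
  have hlam_mono : ∀ j k : ℕ, j ≤ k → lam j ≤ lam k := by
    intro j k h
    apply Real.rpow_le_rpow_left_iff (by norm_num : (1:ℝ) < 2) |>.mpr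
    have : (j:ℝ) ≤ (k:ℝ) := by exact_mod_cast h
    linarith
  have hlam_succ : ∀ j, lam (j+1) = 2 * lam j := by
    intro j
    show (2:ℝ) ^ ((((j+1):ℕ):ℝ) - 1) = 2 * (2:ℝ) ^ ((j:ℝ) - 1)
    rw [show ((((j+1):ℕ):ℝ) - 1) = ((j:ℝ)-1) + 1 by push_cast; ring,
      Real.rpow_add_one (by norm_num)]
    ring
  have hlam1 : lam 1 = 1 := by
    show (2:ℝ) ^ (((1:ℕ):ℝ) - 1) = 1
    norm_num
  set lev : ℕ → Set (EuclideanSpace ℝ (Fin n)) := fun j => {x | lam j ≤ |u x|} with hlevdef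
  have hlev_meas : ∀ j, MeasurableSet (lev j) :=
    fun j => measurableSet_le measurable_const hu.abs
  have hlev_sub : ∀ j k : ℕ, j ≤ k → lev k ⊆ lev j :=
    fun j k h x hx => le_trans (hlam_mono j k h) hx
  set m : ℕ → ℝ≥0∞ := fun j => volume (lev j) with hmdef
  have hcheb : ∀ j, ENNReal.ofReal (lam j ^ p) * m j ≤ 1 :=
    fun j => le_trans (cheb hp hu (hlam_pos j)) hP
  have hm_fin : ∀ j, m j ≠ ⊤ := by
    intro j h
    have h1 := hcheb j
    have hne : ENNReal.ofReal (lam j ^ p) ≠ 0 := by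
      simp only [ne_eq, ENNReal.ofReal_eq_zero, not_le]
      exact Real.rpow_pos_of_pos (hlam_pos j) p
    rw [h, ENNReal.mul_top hne] at h1
    exact absurd h1 (by simp)
  set v : ℕ → ℝ := fun j => (m j).toReal with hvdef
  have hmv : ∀ j, m j = ENNReal.ofReal (v j) := fun j => (ENNReal.ofReal_toReal (hm_fin j)).symm
  set w : ℕ → ℝ := fun j => lam j ^ p * c3 * v j ^ (-θ) with hwdef
  set inr : EuclideanSpace ℝ (Fin n) → ℝ≥0∞ :=
    fun x => ∫⁻ y, ENNReal.ofReal (|u x - u y| ^ p / ‖x - y‖ ^ ((n:ℝ) + s * p)) with hinrdef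
  have hDint : (∫⁻ x, inr x) ≤ 1 := hD
  have key1 : ∀ (j : ℕ) x, x ∈ lev (j+1) → 0 < m j → ENNReal.ofReal (w j) ≤ inr x := by
    intro j x hx hmj
    refine inner_bound hn hs0 hp u (hlev_meas j) hmj (lt_top_iff_ne_top.mpr (hm_fin j))
      (hlam_pos j) x ?_
    intro y hy
    have hy' : |u y| < lam j := not_le.mp hy
    have hx' : lam (j+1) ≤ |u x| := hx
    have habs : |u x| - |u y| ≤ |u x - u y| := abs_sub_abs_le_abs_sub _ _
    have h2l : lam (j+1) = 2 * lam j := hlam_succ j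
    linarith
  have key2 : ∀ j, ENNReal.ofReal (w j) * m (j+1) ≤ 1 := by
    intro j
    rcases eq_or_lt_of_le (zero_le : (0:ℝ≥0∞) ≤ m j) with h0 | hmj
    · have hv0 : v j = 0 := by rw [hvdef]; simp [← h0]
      have : w j = 0 := by
        rw [hwdef]
        simp only [hv0, Real.zero_rpow (by linarith : -θ ≠ 0), mul_zero]
      simp [this]
    · calc ENNReal.ofReal (w j) * m (j+1)
          = ∫⁻ _ in lev (j+1), ENNReal.ofReal (w j) := (setLIntegral_const _ _).symm
        _ ≤ ∫⁻ x in lev (j+1), inr x :=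
            setLIntegral_mono' (hlev_meas _) (fun x hx => key1 j x hx hmj)
        _ ≤ ∫⁻ x, inr x := setLIntegral_le_lintegral _ _
        _ ≤ 1 := hDint
  -- shells
  set U : ℕ → Set (EuclideanSpace ℝ (Fin n)) := fun j => lev (j+1) \ lev (j+2) with hUdef
  have hU_meas : ∀ j, MeasurableSet (U j) := fun j => (hlev_meas _).diff (hlev_meas _)
  have hU_disj : Pairwise (Function.onFun Disjoint U) := by
    have hlt : ∀ i j : ℕ, i < j → Disjoint (U i) (U j) := by
      intro i j hij
      refine Set.disjoint_left.mpr ?_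
      intro a hai haj
      exact hai.2 (hlev_sub (i+2) (j+1) (by omega) haj.1)
    intro i j hij
    rcases hij.lt_or_gt with h|h
    · exact hlt i j h
    · exact (hlt j i h).symm
  have hUnion : (⋃ j, U j) = lev 1 := by
    apply Set.Subset.antisymm
    · exact Set.iUnion_subset fun j x hx => hlev_sub 1 (j+1) (by omega) hx.1
    · intro x hx
      have hex : ∃ j : ℕ, |u x| < lam (j+2) := by
        obtain ⟨k, hk⟩ := pow_unbounded_of_one_lt (|u x|) (by norm_num : (1:ℝ) < 2)
        refine ⟨k, lt_of_lt_of_le hk ?_⟩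
        rw [hlamdef, ← Real.rpow_natCast 2 k]
        apply Real.rpow_le_rpow_left_iff (by norm_num : (1:ℝ) < 2) |>.mpr
        push_cast
        linarith
      classical
      refine Set.mem_iUnion.mpr
        ⟨Nat.find hex, ?_, fun hcon => absurd (Nat.find_spec hex) (not_lt.mpr hcon)⟩
      rcases Nat.eq_zero_or_pos (Nat.find hex) with h0|h0
      · rw [h0]; exact hx
      · have hmin := Nat.find_min hex (m := Nat.find hex - 1) (by omega)
        simp only [not_lt] at hmin
        have heq : Nat.find hex - 1 + 2 = Nat.find hex + 1 := by omega
        rwa [heq] at hmin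
  -- the real identity
  have hidr : ∀ j : ℕ, 0 < v j →
      lam (j+2) ^ pc = w j * (2 ^ (pc + p) / c3) * ((lam (j+1) ^ pc * v j) ^ θ) := by
    intro j hvj
    have hvv : v j ^ (-θ) * v j ^ θ = 1 := by
      rw [← Real.rpow_add hvj, neg_add_cancel, Real.rpow_zero]
    symm
    calc w j * (2 ^ (pc + p) / c3) * ((lam (j+1) ^ pc * v j) ^ θ)
        = (lam j ^ p * lam (j+1) ^ (pc*θ) * 2 ^ (pc+p)) * (c3 / c3) * (v j ^ (-θ) * v j ^ θ) := by
          rw [hwdef]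
          rw [Real.mul_rpow (Real.rpow_nonneg (hlam_pos _).le _) hvj.le,
            ← Real.rpow_mul (hlam_pos _).le]
          ring
      _ = lam j ^ p * lam (j+1) ^ (pc*θ) * 2 ^ (pc+p) := by
          rw [div_self hc3.ne', hvv, mul_one, mul_one]
      _ = lam (j+2) ^ pc := by
          rw [hpcθ, hlame, hlame, hlame, ← Real.rpow_add two_pos, ← Real.rpow_add two_pos]
          congr 1
          push_cast
          ring
  set b : ℕ → ℝ≥0∞ := fun j => ENNReal.ofReal (lam (j+1) ^ pc) * m j with hbdef
  have hofid : ∀ j : ℕ, 0 < m j →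
      ENNReal.ofReal (lam (j+2) ^ pc) = ENNReal.ofReal (w j) * (A0 * b j ^ θ) := by
    intro j hmj
    have hvj : 0 < v j := ENNReal.toReal_pos hmj.ne' (hm_fin j)
    have hwpos : 0 < w j := by
      simp only [hwdef]
      exact mul_pos (mul_pos (Real.rpow_pos_of_pos (hlam_pos j) p) hc3)
        (Real.rpow_pos_of_pos hvj _)
    have hb : b j ^ θ = ENNReal.ofReal ((lam (j+1) ^ pc * v j) ^ θ) := by
      simp only [hbdef]
      rw [hmv j, ← ENNReal.ofReal_mul (Real.rpow_nonneg (hlam_pos _).le _)]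
      rw [← ENNReal.ofReal_rpow_of_nonneg
        (mul_nonneg (Real.rpow_nonneg (hlam_pos _).le _) hvj.le) hθ0.le]
    rw [hb, hA0def,
      ← ENNReal.ofReal_mul (le_of_lt (div_pos (Real.rpow_pos_of_pos two_pos _) hc3)),
      ← ENNReal.ofReal_mul hwpos.le]
    rw [← mul_assoc]
    exact congrArg ENNReal.ofReal (hidr j hvj)
  -- recursion bound
  have hm_zero : ∀ j, m j = 0 → m (j+1) = 0 := fun j h =>
    le_antisymm (le_trans (measure_mono (hlev_sub j (j+1) (by omega))) h.le) zero_le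
  have hrec : ∀ j, b (j+1) ≤ A0 * b j ^ θ := by
    intro j
    rcases eq_or_lt_of_le (zero_le : (0:ℝ≥0∞) ≤ m j) with h0 | hmj
    · have : b (j+1) = 0 := by
        simp only [hbdef, hm_zero j h0.symm, mul_zero]
      simp [this]
    · calc b (j+1) = ENNReal.ofReal (lam (j+2) ^ pc) * m (j+1) := rfl
        _ = (ENNReal.ofReal (w j) * m (j+1)) * (A0 * b j ^ θ) := by
            rw [hofid j hmj]; ring
        _ ≤ 1 * (A0 * b j ^ θ) := mul_le_mul_left (key2 j) _
        _ = A0 * b j ^ θ := one_mul _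
  have hb0 : b 0 ≤ ENNReal.ofReal ((2:ℝ) ^ p) := by
    have hb00 : b 0 = m 0 := by
      simp only [hbdef, hlam1, Real.one_rpow, ENNReal.ofReal_one, one_mul]
    have h00 := hcheb 0
    have hlam0 : lam 0 ^ p = (2:ℝ) ^ (-p) := by
      rw [hlame 0 p]
      norm_num
    rw [hlam0] at h00
    have hmul : ENNReal.ofReal ((2:ℝ)^p) * ENNReal.ofReal ((2:ℝ)^(-p)) = 1 := by
      rw [← ENNReal.ofReal_mul (by positivity), ← Real.rpow_add two_pos]
      norm_num
    calc b 0 = m 0 := hb00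
      _ = ENNReal.ofReal ((2:ℝ)^p) * (ENNReal.ofReal ((2:ℝ)^(-p)) * m 0) := by
          rw [← mul_assoc, hmul, one_mul]
      _ ≤ ENNReal.ofReal ((2:ℝ)^p) * 1 := mul_le_mul_right h00 _
      _ = ENNReal.ofReal ((2:ℝ)^p) := mul_one _
  have hbB : ∀ j, b j ≤ B0 := by
    intro j
    refine le_trans (rec_bound hθ0 hθ1 b A0 hrec j) ?_
    rw [hB0def]
    exact max_le_max hb0 (le_refl _)
  -- energy sum over shells
  have hterm1 : ∀ j : ℕ, ENNReal.ofReal (w j) * volume (U j) ≤ ∫⁻ x in U j, inr x := by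
    intro j
    rcases eq_or_lt_of_le (zero_le : (0:ℝ≥0∞) ≤ m j) with h0 | hmj
    · have hv0 : v j = 0 := by rw [hvdef]; simp [← h0]
      have : w j = 0 := by
        rw [hwdef]
        simp only [hv0, Real.zero_rpow (by linarith : -θ ≠ 0), mul_zero]
      simp [this]
    · calc ENNReal.ofReal (w j) * volume (U j)
          = ∫⁻ _ in U j, ENNReal.ofReal (w j) := (setLIntegral_const _ _).symm
        _ ≤ ∫⁻ x in U j, inr x :=
            setLIntegral_mono' (hU_meas _) (fun x hx => key1 j x hx.1 hmj)
  have hesum : (∑' j, ENNReal.ofReal (w j) * volume (U j)) ≤ 1 := by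
    calc (∑' j, ENNReal.ofReal (w j) * volume (U j))
        ≤ ∑' j, ∫⁻ x in U j, inr x := ENNReal.tsum_le_tsum hterm1
      _ = ∫⁻ x in ⋃ j, U j, inr x := (lintegral_iUnion hU_meas hU_disj _).symm
      _ ≤ ∫⁻ x, inr x := setLIntegral_le_lintegral _ _
      _ ≤ 1 := hDint
  -- final assembly
  have hsplit := (lintegral_add_compl (μ := volume) (fun x => ENNReal.ofReal (|u x| ^ q)) (hlev_meas 1)).symm
  have hcomp : (∫⁻ x in (lev 1)ᶜ, ENNReal.ofReal (|u x| ^ q)) ≤ 1 := by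
    refine le_trans (le_trans (setLIntegral_mono' (hlev_meas 1).compl ?_)
      (setLIntegral_le_lintegral _ _)) hP
    intro x hx
    have hx1 : |u x| < 1 := by
      have := hx
      simp only [hlevdef, Set.mem_compl_iff, Set.mem_setOf_eq, not_le, hlam1] at this
      exact this
    rcases eq_or_lt_of_le (abs_nonneg (u x)) with hz | hz
    · rw [← hz, Real.zero_rpow (ne_of_gt (by linarith : (0:ℝ) < q)),
        Real.zero_rpow (ne_of_gt (by linarith : (0:ℝ) < p))]
    · exact ENNReal.ofReal_le_ofReal
        (Real.rpow_le_rpow_of_exponent_ge hz hx1.le hq1)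
  have hterm2 : ∀ j : ℕ, (∫⁻ x in U j, ENNReal.ofReal (|u x| ^ pc))
      ≤ (ENNReal.ofReal (w j) * volume (U j)) * (A0 * B0 ^ θ) := by
    intro j
    rcases eq_or_lt_of_le (zero_le : (0:ℝ≥0∞) ≤ m j) with h0 | hmj
    · have hU0 : volume (U j) = 0 :=
        le_antisymm (le_trans (measure_mono (fun x hx => hlev_sub j (j+1) (by omega) hx.1))
          h0.symm.le) zero_le
      rw [setLIntegral_measure_zero _ _ hU0]
      exact zero_le
    · calc (∫⁻ x in U j, ENNReal.ofReal (|u x| ^ pc))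
          ≤ ∫⁻ _ in U j, ENNReal.ofReal (lam (j+2) ^ pc) := by
            refine setLIntegral_mono' (hU_meas j) ?_
            intro x hx
            have hxu : |u x| < lam (j+2) := not_le.mp hx.2
            exact ENNReal.ofReal_le_ofReal
              (Real.rpow_le_rpow (abs_nonneg _) hxu.le hpc_pos.le)
        _ = ENNReal.ofReal (lam (j+2) ^ pc) * volume (U j) := setLIntegral_const _ _
        _ = (ENNReal.ofReal (w j) * volume (U j)) * (A0 * b j ^ θ) := by
            rw [hofid j hmj]; ring
        _ ≤ (ENNReal.ofReal (w j) * volume (U j)) * (A0 * B0 ^ θ) := by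
            exact mul_le_mul_right (mul_le_mul_right
              (ENNReal.rpow_le_rpow (hbB j) hθ0.le) _) _
  have hlev1int : (∫⁻ x in lev 1, ENNReal.ofReal (|u x| ^ q)) ≤ A0 * B0 ^ θ := by
    calc (∫⁻ x in lev 1, ENNReal.ofReal (|u x| ^ q))
        ≤ ∫⁻ x in lev 1, ENNReal.ofReal (|u x| ^ pc) := by
          refine setLIntegral_mono' (hlev_meas 1) ?_
          intro x hx
          have hx1 : 1 ≤ |u x| := by
            have := hx
            simp only [hlevdef, Set.mem_setOf_eq, hlam1] at this
            exact this
          exact ENNReal.ofReal_le_ofReal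
            (Real.rpow_le_rpow_of_exponent_le hx1 hq2)
      _ = ∫⁻ x in ⋃ j, U j, ENNReal.ofReal (|u x| ^ pc) := by rw [hUnion]
      _ = ∑' j, ∫⁻ x in U j, ENNReal.ofReal (|u x| ^ pc) := lintegral_iUnion hU_meas hU_disj _
      _ ≤ ∑' j, (ENNReal.ofReal (w j) * volume (U j)) * (A0 * B0 ^ θ) :=
          ENNReal.tsum_le_tsum hterm2
      _ = (∑' j, ENNReal.ofReal (w j) * volume (U j)) * (A0 * B0 ^ θ) :=
          ENNReal.tsum_mul_right
      _ ≤ 1 * (A0 * B0 ^ θ) := mul_le_mul_left hesum _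
      _ = A0 * B0 ^ θ := one_mul _
  calc (∫⁻ x, ENNReal.ofReal (|u x| ^ q))
      = (∫⁻ x in lev 1, ENNReal.ofReal (|u x| ^ q))
        + ∫⁻ x in (lev 1)ᶜ, ENNReal.ofReal (|u x| ^ q) := hsplit
    _ ≤ A0 * B0 ^ θ + 1 := add_le_add hlev1int hcomp

end FracSobAux

namespace FracSobAux

lemma gag_scale {n : ℕ} (s p : ℝ) (u : EuclideanSpace ℝ (Fin n) → ℝ) {c : ℝ} (hc : 0 ≤ c)
    (hp : 0 ≤ p) :
    gagliardoP n s p (fun x => c * u x) = ENNReal.ofReal (c ^ p) * gagliardoP n s p u := by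
  unfold gagliardoP
  rw [← lintegral_const_mul' _ _ ENNReal.ofReal_ne_top]
  congr 1; funext x
  rw [← lintegral_const_mul' _ _ ENNReal.ofReal_ne_top]
  congr 1; funext y
  rw [← mul_sub, abs_mul, abs_of_nonneg hc, Real.mul_rpow hc (abs_nonneg _), mul_div_assoc,
    ENNReal.ofReal_mul (Real.rpow_nonneg hc _)]

lemma nnnorm_lint {n : ℕ} (u : EuclideanSpace ℝ (Fin n) → ℝ) (r : ℝ) (hr : 0 ≤ r) :
    (∫⁻ x, ‖u x‖ₑ ^ r) = ∫⁻ x, ENNReal.ofReal (|u x| ^ r) := by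
  congr 1; funext x
  rw [← ofReal_norm, Real.norm_eq_abs,
    ← ENNReal.ofReal_rpow_of_nonneg (abs_nonneg _) hr]

end FracSobAux


end FracSobAuxSection

set_option maxHeartbeats 2000000 in
/-- continuous embedding `W^{s,p}(ℝ^n) ↪ L^q(ℝ^n)` for `q ∈ [p, p_s^*]`. -/
theorem fractional_sobolev_embedding
    (n : ℕ) (s p q : ℝ) (hn : 1 ≤ n) (hs0 : 0 < s) (hs1 : s < 1) (hp : 1 ≤ p)
    (hsp : s * p < n) (hq1 : p ≤ q) (hq2 : q ≤ n * p / (n - s * p)) :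
    ∃ C > (0:ℝ), ∀ u : EuclideanSpace ℝ (Fin n) → ℝ, Measurable u →
      MemLp u (ENNReal.ofReal p) → gagliardoP n s p u < ⊤ →
      MemLp u (ENNReal.ofReal q) ∧
      (eLpNorm u (ENNReal.ofReal q) volume).toReal ≤
        C * ((∫ x, |u x| ^ p) + (gagliardoP n s p u).toReal) ^ (1 / p) := by
  obtain ⟨Cc, hCcT, hcore⟩ := FracSobAux.core hn hs0 hs1 hp hsp hq1 hq2
  set M : ℝ≥0∞ := max 1 Cc with hMdef
  have hMT : M ≠ ⊤ := by
    rw [hMdef]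
    simp [hCcT]
  have hM1 : 1 ≤ M.toReal := by
    have h := ENNReal.toReal_mono hMT (le_max_left 1 Cc)
    simpa using h
  have hp0 : (0:ℝ) < p := by linarith
  have hq0 : (0:ℝ) < q := by linarith
  have hqene : (ENNReal.ofReal q) ≠ 0 := by
    simp only [ne_eq, ENNReal.ofReal_eq_zero, not_le]; linarith
  have hpene : (ENNReal.ofReal p) ≠ 0 := by
    simp only [ne_eq, ENNReal.ofReal_eq_zero, not_le]; linarith
  refine ⟨M.toReal, by linarith, ?_⟩
  intro u hu hMem hD
  set P : ℝ≥0∞ := ∫⁻ x, ENNReal.ofReal (|u x| ^ p) with hPdef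
  have hPnn : (∫⁻ x, ‖u x‖ₑ ^ p) = P := FracSobAux.nnnorm_lint u p hp0.le
  have hPfin : P ≠ ⊤ := by
    have h1 := hMem.2
    rw [eLpNorm_eq_lintegral_rpow_enorm_toReal hpene ENNReal.ofReal_ne_top,
      ENNReal.toReal_ofReal hp0.le, hPnn] at h1
    intro hPT
    rw [hPT, ENNReal.top_rpow_of_pos (by positivity : (0:ℝ) < 1/p)] at h1
    exact absurd h1 (lt_irrefl ⊤)
  have hIeq : (∫ x, |u x| ^ p) = P.toReal := by
    rw [integral_eq_lintegral_of_nonneg_ae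
      (Filter.Eventually.of_forall (fun x => Real.rpow_nonneg (abs_nonneg _) p))
      ((by measurability : Measurable fun x => |u x| ^ p).aestronglyMeasurable)]
  have hDfin : gagliardoP n s p u ≠ ⊤ := hD.ne
  set K : ℝ≥0∞ := P + gagliardoP n s p u with hKdef
  have hKfin : K ≠ ⊤ := ENNReal.add_ne_top.mpr ⟨hPfin, hDfin⟩
  have hKtoReal : K.toReal = (∫ x, |u x| ^ p) + (gagliardoP n s p u).toReal := by
    rw [hKdef, ENNReal.toReal_add hPfin hDfin, hIeq]
  have hbase : 0 ≤ (∫ x, |u x| ^ p) + (gagliardoP n s p u).toReal :=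
    add_nonneg (integral_nonneg fun x => Real.rpow_nonneg (abs_nonneg _) _)
      ENNReal.toReal_nonneg
  rcases eq_or_ne K 0 with hK0 | hKne
  · have hP0 : P = 0 := (add_eq_zero.mp hK0).1
    have huz : u =ᵐ[volume] 0 := by
      have h0 : (fun x => ENNReal.ofReal (|u x| ^ p)) =ᵐ[volume] 0 := by
        rw [← lintegral_eq_zero_iff'
          ((by measurability : Measurable fun x => ENNReal.ofReal (|u x| ^ p)).aemeasurable)]
        exact hP0
      filter_upwards [h0] with x hx
      simp only [Pi.zero_apply, ENNReal.ofReal_eq_zero] at hx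
      have h1 : |u x| ^ p = 0 := le_antisymm hx (Real.rpow_nonneg (abs_nonneg _) _)
      by_contra hne
      exact absurd h1 (ne_of_gt (Real.rpow_pos_of_pos (abs_pos.mpr hne) p))
    refine ⟨(memLp_congr_ae huz).mpr MemLp.zero, ?_⟩
    have he : eLpNorm u (ENNReal.ofReal q) volume = 0 := by
      rw [eLpNorm_congr_ae huz, eLpNorm_zero]
    rw [he]
    simpa using mul_nonneg (by linarith : (0:ℝ) ≤ M.toReal) (Real.rpow_nonneg hbase (1/p))
  · have hk0 : 0 < K.toReal := ENNReal.toReal_pos hKne hKfin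
    set k : ℝ := K.toReal with hkdef
    set t : ℝ := k ^ (-(1/p)) with htdef
    have ht0 : 0 < t := Real.rpow_pos_of_pos hk0 _
    have htp : t ^ p = k⁻¹ := by
      rw [htdef, ← Real.rpow_mul hk0.le, show (-(1/p))*p = -1 by field_simp,
        Real.rpow_neg_one]
    have hKk : K = ENNReal.ofReal k := (ENNReal.ofReal_toReal hKfin).symm
    have hsum1 : ENNReal.ofReal (t^p) * K = 1 := by
      rw [htp, hKk, ← ENNReal.ofReal_mul (inv_nonneg.mpr hk0.le),
        inv_mul_cancel₀ hk0.ne', ENNReal.ofReal_one]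
    have hPv1 : (∫⁻ x, ENNReal.ofReal (|t * u x| ^ p)) ≤ 1 := by
      rw [FracSobAux.lint_scale u ht0.le, ← hsum1]
      exact mul_le_mul_right le_self_add _
    have hDv1 : gagliardoP n s p (fun x => t * u x) ≤ 1 := by
      rw [FracSobAux.gag_scale s p u ht0.le hp0.le, ← hsum1]
      exact mul_le_mul_right le_add_self _
    have hQv := hcore (fun x => t * u x) (measurable_const.mul hu) hPv1 hDv1
    have htq0 : (0:ℝ) < t ^ q := Real.rpow_pos_of_pos ht0 q
    have htqne : ENNReal.ofReal (t^q) ≠ 0 := by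
      simp only [ne_eq, ENNReal.ofReal_eq_zero, not_le]; exact htq0
    have hQu : (∫⁻ x, ENNReal.ofReal (|u x| ^ q)) ≤ (ENNReal.ofReal (t^q))⁻¹ * M := by
      have h1 : ENNReal.ofReal (t^q) * (∫⁻ x, ENNReal.ofReal (|u x| ^ q)) ≤ Cc := by
        rw [← FracSobAux.lint_scale u ht0.le]
        exact hQv
      calc (∫⁻ x, ENNReal.ofReal (|u x| ^ q))
          = (ENNReal.ofReal (t^q))⁻¹ * (ENNReal.ofReal (t^q) * ∫⁻ x, ENNReal.ofReal (|u x| ^ q)) := by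
            rw [← mul_assoc, ENNReal.inv_mul_cancel htqne ENNReal.ofReal_ne_top, one_mul]
        _ ≤ (ENNReal.ofReal (t^q))⁻¹ * Cc := mul_le_mul_right h1 _
        _ ≤ (ENNReal.ofReal (t^q))⁻¹ * M := mul_le_mul_right (le_max_right 1 Cc) _
    have hQRfin : (ENNReal.ofReal (t^q))⁻¹ * M ≠ ⊤ :=
      ENNReal.mul_ne_top (ENNReal.inv_ne_top.mpr htqne) hMT
    have hQfin : (∫⁻ x, ENNReal.ofReal (|u x| ^ q)) ≠ ⊤ := ne_top_of_le_ne_top hQRfin hQu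
    have heLp : eLpNorm u (ENNReal.ofReal q) volume
        = (∫⁻ x, ENNReal.ofReal (|u x| ^ q)) ^ (1/q) := by
      rw [eLpNorm_eq_lintegral_rpow_enorm_toReal hqene ENNReal.ofReal_ne_top,
        ENNReal.toReal_ofReal hq0.le, FracSobAux.nnnorm_lint u q hq0.le]
    have hMem2 : MemLp u (ENNReal.ofReal q) := by
      refine ⟨hu.aestronglyMeasurable, ?_⟩
      rw [heLp]
      exact ENNReal.rpow_lt_top_of_nonneg (by positivity) hQfin
    refine ⟨hMem2, ?_⟩
    have hinvq : ((ENNReal.ofReal (t^q))⁻¹) ^ ((1:ℝ)/q) = ENNReal.ofReal t⁻¹ := by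
      rw [← ENNReal.ofReal_inv_of_pos htq0,
        ENNReal.ofReal_rpow_of_nonneg (inv_nonneg.mpr htq0.le) (by positivity)]
      congr 1
      rw [← Real.rpow_neg ht0.le, ← Real.rpow_mul ht0.le,
        show -q * (1/q) = -1 by field_simp, Real.rpow_neg_one]
    have hM1' : (1:ℝ≥0∞) ≤ M := le_max_left _ _
    have hBnd : eLpNorm u (ENNReal.ofReal q) volume ≤ ENNReal.ofReal t⁻¹ * M := by
      rw [heLp]
      calc (∫⁻ x, ENNReal.ofReal (|u x| ^ q)) ^ ((1:ℝ)/q)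
          ≤ ((ENNReal.ofReal (t^q))⁻¹ * M) ^ ((1:ℝ)/q) :=
            ENNReal.rpow_le_rpow hQu (by positivity)
        _ = ((ENNReal.ofReal (t^q))⁻¹) ^ ((1:ℝ)/q) * M ^ ((1:ℝ)/q) :=
            ENNReal.mul_rpow_of_nonneg _ _ (by positivity)
        _ ≤ ENNReal.ofReal t⁻¹ * M := by
            rw [hinvq]
            refine mul_le_mul_right ?_ _
            calc M ^ ((1:ℝ)/q) ≤ M ^ (1:ℝ) :=
                  ENNReal.rpow_le_rpow_of_exponent_le hM1'
                    (div_le_one_of_le₀ (by linarith) hq0.le)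
              _ = M := ENNReal.rpow_one M
    have hfinal := ENNReal.toReal_mono (ENNReal.mul_ne_top ENNReal.ofReal_ne_top hMT) hBnd
    rw [ENNReal.toReal_mul, ENNReal.toReal_ofReal (inv_nonneg.mpr ht0.le)] at hfinal
    have htinv : t⁻¹ = k ^ ((1:ℝ)/p) := by
      rw [htdef, Real.rpow_neg hk0.le, inv_inv]
    rw [htinv] at hfinal
    calc (eLpNorm u (ENNReal.ofReal q) volume).toReal
        ≤ k ^ ((1:ℝ)/p) * M.toReal := hfinal
      _ = M.toReal * ((∫ x, |u x| ^ p) + (gagliardoP n s p u).toReal) ^ (1/p) := by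
          rw [← hKtoReal]
          ring
end

section
/- Let n ≥ 1, p ≥ 2, 0 < s < 1, and let V : ℝ^n → ℝ be continuous with V ≥ 0. Then for any u, v ∈ X^s it holds that ⟨A(u) − A(v), u − v⟩ ≥ (‖u‖_{X^s}^{p−1} − ‖v‖_{X^s}^{p−1})(‖u‖_{X^s} − ‖v‖_{X^s}), where ⟨A(u) − A(v), u − v⟩ = ⟨A(u), u − v⟩ − ⟨A(v), u − v⟩. -/
open MeasureTheory Real Filter
open scoped ENNReal NNReal

noncomputable section

namespace ApairAux

lemma conj_aux {p : ℝ} (hp : 2 ≤ p) : Real.HolderConjugate (p/(p-1)) p := by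
  have hp0 : (0:ℝ) < p := by linarith
  have hp1 : (0:ℝ) < p - 1 := by linarith
  exact ((Real.holderConjugate_iff_eq_conjExponent (by linarith)).mpr rfl).symm

lemma alpha_mul {p : ℝ} (hp : 2 ≤ p) : (p-1)/p * (p/(p-1)) = 1 := by
  have hp0 : (p:ℝ) ≠ 0 := by linarith
  have hp1 : (p:ℝ) - 1 ≠ 0 := by linarith
  field_simp

lemma beta_mul {p : ℝ} (hp : 2 ≤ p) : 1/p * p = 1 := by
  have hp0 : (p:ℝ) ≠ 0 := by linarith
  field_simp

/-- Hölder inequality for lintegrals of real nonnegative functions, exponents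
`p/(p-1)` and `p`. -/
lemma holder_lintegral {X : Type*} [MeasurableSpace X] (μ : Measure X) {p : ℝ} (hp : 2 ≤ p)
    {f g : X → ℝ} (hf : Measurable f) (hg : Measurable g)
    (hf0 : ∀ x, 0 ≤ f x) (hg0 : ∀ x, 0 ≤ g x) :
    ∫⁻ x, ENNReal.ofReal (f x ^ ((p-1)/p) * g x ^ (1/p)) ∂μ ≤
      (∫⁻ x, ENNReal.ofReal (f x) ∂μ) ^ ((p-1)/p) * (∫⁻ x, ENNReal.ofReal (g x) ∂μ) ^ (1/p) := by
  have hp0 : (0:ℝ) < p := by linarith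
  have hα : (0:ℝ) ≤ (p-1)/p := div_nonneg (by linarith) hp0.le
  have hβ : (0:ℝ) ≤ 1/p := by positivity
  have hconj := conj_aux hp
  have hF : Measurable fun x => (ENNReal.ofReal (f x)) ^ ((p-1)/p) :=
    hf.ennreal_ofReal.pow measurable_const
  have hG : Measurable fun x => (ENNReal.ofReal (g x)) ^ (1/p) :=
    hg.ennreal_ofReal.pow measurable_const
  have key := ENNReal.lintegral_mul_le_Lp_mul_Lq μ hconj hF.aemeasurable hG.aemeasurable
  have h1 : ∀ x, ((ENNReal.ofReal (f x)) ^ ((p-1)/p)) ^ (p/(p-1)) = ENNReal.ofReal (f x) := by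
    intro x
    rw [← ENNReal.rpow_mul, alpha_mul hp, ENNReal.rpow_one]
  have h2 : ∀ x, ((ENNReal.ofReal (g x)) ^ (1/p)) ^ p = ENNReal.ofReal (g x) := by
    intro x
    rw [← ENNReal.rpow_mul, beta_mul hp, ENNReal.rpow_one]
  have hptw : ∀ x, ENNReal.ofReal (f x ^ ((p-1)/p) * g x ^ (1/p)) =
      (ENNReal.ofReal (f x)) ^ ((p-1)/p) * (ENNReal.ofReal (g x)) ^ (1/p) := by
    intro x
    rw [ENNReal.ofReal_mul (Real.rpow_nonneg (hf0 x) _),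
      ENNReal.ofReal_rpow_of_nonneg (hf0 x) hα, ENNReal.ofReal_rpow_of_nonneg (hg0 x) hβ]
  calc ∫⁻ x, ENNReal.ofReal (f x ^ ((p-1)/p) * g x ^ (1/p)) ∂μ
      = ∫⁻ x, ((ENNReal.ofReal (f x)) ^ ((p-1)/p)) * ((ENNReal.ofReal (g x)) ^ (1/p)) ∂μ := by
        exact lintegral_congr hptw
    _ ≤ (∫⁻ x, ((ENNReal.ofReal (f x)) ^ ((p-1)/p)) ^ (p/(p-1)) ∂μ) ^ (1/(p/(p-1))) *
        (∫⁻ x, ((ENNReal.ofReal (g x)) ^ (1/p)) ^ p ∂μ) ^ (1/p) := key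
    _ = (∫⁻ x, ENNReal.ofReal (f x) ∂μ) ^ ((p-1)/p) * (∫⁻ x, ENNReal.ofReal (g x) ∂μ) ^ (1/p) := by
        rw [one_div_div]
        congr 2
        · exact lintegral_congr h1
        · exact lintegral_congr h2


lemma abs_collapse {p : ℝ} (hp : 2 ≤ p) (t : ℝ) : |t| ^ (p-2) * |t| = |t| ^ (p-1) := by
  nth_rewrite 2 [← Real.rpow_one |t|]
  rw [← Real.rpow_add' (abs_nonneg t) (by intro h; linarith)]
  congr 1
  ring

lemma pow_collapse {p : ℝ} (hp : 2 ≤ p) (t : ℝ) : |t| ^ (p-2) * t * t = |t| ^ p := by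
  have h2 : t * t = |t| ^ (2:ℝ) := by
    rw [show ((2:ℝ)) = ((2:ℕ):ℝ) by norm_num, Real.rpow_natCast]
    rw [← abs_mul_abs_self t]
    ring
  rw [mul_assoc, h2, ← Real.rpow_add' (abs_nonneg t) (by intro h; linarith)]
  congr 1
  ring

/-- Pointwise Hölder-type bound for the kernel of the fractional `p`-Laplacian. -/
lemma kernel_abs_le {p : ℝ} (hp : 2 ≤ p) (t w D : ℝ) (hD : 0 ≤ D) :
    |(|t| ^ (p-2) * t * w / D)| ≤ (|t| ^ p / D) ^ ((p-1)/p) * (|w| ^ p / D) ^ (1/p) := by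
  have hp0 : (0:ℝ) < p := by linarith
  rcases hD.eq_or_lt with h0 | hDpos
  · rw [← h0, div_zero, div_zero, div_zero, abs_zero]
    exact mul_nonneg (Real.rpow_nonneg le_rfl _) (Real.rpow_nonneg le_rfl _)
  · have habs : |(|t| ^ (p-2) * t * w / D)| = |t| ^ (p-1) * |w| / D := by
      rw [abs_div, abs_of_pos hDpos, abs_mul, abs_mul,
        abs_of_nonneg (Real.rpow_nonneg (abs_nonneg t) _), abs_collapse hp]
    have e1 : (|t| ^ p / D) ^ ((p-1)/p) = |t| ^ (p-1) / D ^ ((p-1)/p) := by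
      rw [Real.div_rpow (Real.rpow_nonneg (abs_nonneg t) _) hD,
        ← Real.rpow_mul (abs_nonneg t)]
      congr 2
      field_simp
    have e2 : (|w| ^ p / D) ^ (1/p) = |w| / D ^ (1/p) := by
      rw [Real.div_rpow (Real.rpow_nonneg (abs_nonneg w) _) hD,
        ← Real.rpow_mul (abs_nonneg w), mul_one_div, div_self (ne_of_gt hp0), Real.rpow_one]
    rw [habs, e1, e2, div_mul_div_comm, ← Real.rpow_add hDpos]
    have hsum : (p-1)/p + 1/p = 1 := by field_simp; ring
    rw [hsum, Real.rpow_one]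

lemma kernel_diag {p : ℝ} (hp : 2 ≤ p) (t D : ℝ) :
    |t| ^ (p-2) * t * t / D = |t| ^ p / D := by
  rw [pow_collapse hp]

lemma pot_abs_le {p : ℝ} (hp : 2 ≤ p) (V t w : ℝ) (hV : 0 ≤ V) :
    |V * |t| ^ (p-2) * t * w| ≤ (V * |t| ^ p) ^ ((p-1)/p) * (V * |w| ^ p) ^ (1/p) := by
  have hp0 : (0:ℝ) < p := by linarith
  have habs : |V * |t| ^ (p-2) * t * w| = V * |t| ^ (p-1) * |w| := by
    rw [abs_mul, abs_mul, abs_mul, abs_of_nonneg hV,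
      abs_of_nonneg (Real.rpow_nonneg (abs_nonneg t) _)]
    rw [mul_assoc V, abs_collapse hp]
  have hsum : (p-1)/p + 1/p = 1 := by field_simp; ring
  have hVab : V ^ ((p-1)/p) * V ^ (1/p) = V := by
    rw [← Real.rpow_add' hV (by rw [hsum]; norm_num), hsum, Real.rpow_one]
  have e1 : (V * |t| ^ p) ^ ((p-1)/p) = V ^ ((p-1)/p) * |t| ^ (p-1) := by
    rw [Real.mul_rpow hV (Real.rpow_nonneg (abs_nonneg t) _),
      ← Real.rpow_mul (abs_nonneg t)]
    congr 2
    field_simp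
  have e2 : (V * |w| ^ p) ^ (1/p) = V ^ (1/p) * |w| := by
    rw [Real.mul_rpow hV (Real.rpow_nonneg (abs_nonneg w) _),
      ← Real.rpow_mul (abs_nonneg w), mul_one_div, div_self (ne_of_gt hp0), Real.rpow_one]
  rw [habs, e1, e2]
  have heq : V ^ ((p-1)/p) * |t| ^ (p-1) * (V ^ (1/p) * |w|)
      = V * |t| ^ (p-1) * |w| := by
    calc V ^ ((p-1)/p) * |t| ^ (p-1) * (V ^ (1/p) * |w|)
        = (V ^ ((p-1)/p) * V ^ (1/p)) * (|t| ^ (p-1) * |w|) := by ring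
      _ = V * |t| ^ (p-1) * |w| := by rw [hVab]; ring
  exact le_of_eq heq.symm

lemma pot_diag {p : ℝ} (hp : 2 ≤ p) (V t : ℝ) :
    V * |t| ^ (p-2) * t * t = V * |t| ^ p := by
  have h := pow_collapse hp t
  calc V * |t| ^ (p-2) * t * t = V * (|t| ^ (p-2) * t * t) := by ring
    _ = V * |t| ^ p := by rw [h]

/-- Two-term discrete Hölder inequality. -/
lemma holder_two {p : ℝ} (hp : 2 ≤ p) {x y z w : ℝ}
    (hx : 0 ≤ x) (hy : 0 ≤ y) (hz : 0 ≤ z) (hw : 0 ≤ w) :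
    x ^ ((p-1)/p) * y ^ (1/p) + z ^ ((p-1)/p) * w ^ (1/p) ≤
      (x + z) ^ ((p-1)/p) * (y + w) ^ (1/p) := by
  have hconj := conj_aux hp
  have e : ∀ a : ℝ, 0 ≤ a → (a ^ ((p-1)/p)) ^ (p/(p-1)) = a := fun a ha => by
    rw [← Real.rpow_mul ha, alpha_mul hp, Real.rpow_one]
  have e' : ∀ a : ℝ, 0 ≤ a → (a ^ ((1:ℝ)/p)) ^ p = a := fun a ha => by
    rw [← Real.rpow_mul ha, beta_mul hp, Real.rpow_one]
  have key := Real.inner_le_Lp_mul_Lq_of_nonneg (s := (Finset.univ : Finset (Fin 2)))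
    (f := ![x ^ ((p-1)/p), z ^ ((p-1)/p)]) (g := ![y ^ (1/p), w ^ (1/p)]) hconj
    (fun i _ => by fin_cases i <;> exact Real.rpow_nonneg (by assumption) _)
    (fun i _ => by fin_cases i <;> exact Real.rpow_nonneg (by assumption) _)
  simp only [Fin.sum_univ_two, Matrix.cons_val_zero, Matrix.cons_val_one, Matrix.head_cons] at key
  rw [e x hx, e z hz, e' y hy, e' w hw, one_div_div] at key
  exact key


lemma integral_diag {X : Type*} [MeasurableSpace X] {μ : Measure X} {f : X → ℝ}
    (hf : Measurable f) (hf0 : ∀ x, 0 ≤ f x) :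
    ∫ x, f x ∂μ = (∫⁻ x, ENNReal.ofReal (f x) ∂μ).toReal :=
  integral_eq_lintegral_of_nonneg_ae (ae_of_all _ hf0) hf.aestronglyMeasurable

lemma integral_bound {X : Type*} [MeasurableSpace X] {μ : Measure X} {p : ℝ} (hp : 2 ≤ p)
    {K f g : X → ℝ} (hK : Measurable K) (hf : Measurable f) (hg : Measurable g)
    (hf0 : ∀ x, 0 ≤ f x) (hg0 : ∀ x, 0 ≤ g x)
    (hpt : ∀ x, |K x| ≤ f x ^ ((p-1)/p) * g x ^ (1/p))
    (hffin : (∫⁻ x, ENNReal.ofReal (f x) ∂μ) ≠ ⊤)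
    (hgfin : (∫⁻ x, ENNReal.ofReal (g x) ∂μ) ≠ ⊤) :
    Integrable K μ ∧ ∫ x, K x ∂μ ≤
      ((∫⁻ x, ENNReal.ofReal (f x) ∂μ).toReal) ^ ((p-1)/p) *
      ((∫⁻ x, ENNReal.ofReal (g x) ∂μ).toReal) ^ (1/p) := by
  have hp0 : (0:ℝ) < p := by linarith
  have hα : (0:ℝ) ≤ (p-1)/p := div_nonneg (by linarith) hp0.le
  have hβ : (0:ℝ) ≤ 1/p := by positivity
  have hbound : ∫⁻ x, ENNReal.ofReal ‖K x‖ ∂μ ≤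
      (∫⁻ x, ENNReal.ofReal (f x) ∂μ) ^ ((p-1)/p) *
      (∫⁻ x, ENNReal.ofReal (g x) ∂μ) ^ (1/p) := by
    refine le_trans (lintegral_mono fun x => ENNReal.ofReal_le_ofReal ?_)
      (holder_lintegral μ hp hf hg hf0 hg0)
    rw [Real.norm_eq_abs]
    exact hpt x
  have hne : (∫⁻ x, ENNReal.ofReal (f x) ∂μ) ^ ((p-1)/p) *
      (∫⁻ x, ENNReal.ofReal (g x) ∂μ) ^ (1/p) ≠ ⊤ :=
    ENNReal.mul_ne_top (ENNReal.rpow_ne_top_of_nonneg hα hffin)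
      (ENNReal.rpow_ne_top_of_nonneg hβ hgfin)
  have hint : Integrable K μ := by
    refine ⟨hK.aestronglyMeasurable, ?_⟩
    rw [hasFiniteIntegral_iff_norm]
    exact lt_of_le_of_lt hbound (lt_top_iff_ne_top.mpr hne)
  refine ⟨hint, ?_⟩
  calc ∫ x, K x ∂μ ≤ ‖∫ x, K x ∂μ‖ := Real.norm_eq_abs _ ▸ le_abs_self _
    _ ≤ (∫⁻ x, ENNReal.ofReal ‖K x‖ ∂μ).toReal := norm_integral_le_lintegral_norm K
    _ ≤ ((∫⁻ x, ENNReal.ofReal (f x) ∂μ) ^ ((p-1)/p) *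
        (∫⁻ x, ENNReal.ofReal (g x) ∂μ) ^ (1/p)).toReal := ENNReal.toReal_mono hne hbound
    _ = ((∫⁻ x, ENNReal.ofReal (f x) ∂μ).toReal) ^ ((p-1)/p) *
        ((∫⁻ x, ENNReal.ofReal (g x) ∂μ).toReal) ^ (1/p) := by
        rw [ENNReal.toReal_mul, ← ENNReal.toReal_rpow, ← ENNReal.toReal_rpow]


abbrev Eu (n : ℕ) := EuclideanSpace ℝ (Fin n)

def kerF (n : ℕ) (s p : ℝ) (a b : Eu n → ℝ) (z : Eu n × Eu n) : ℝ :=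
  |a z.1 - a z.2| ^ (p-2) * (a z.1 - a z.2) * (b z.1 - b z.2) / ‖z.1 - z.2‖ ^ ((n:ℝ) + s * p)

def ggF (n : ℕ) (s p : ℝ) (a : Eu n → ℝ) (z : Eu n × Eu n) : ℝ :=
  |a z.1 - a z.2| ^ p / ‖z.1 - z.2‖ ^ ((n:ℝ) + s * p)

def potF (n : ℕ) (p : ℝ) (V a b : Eu n → ℝ) (x : Eu n) : ℝ :=
  V x * |a x| ^ (p-2) * a x * b x

def ppF (n : ℕ) (p : ℝ) (V a : Eu n → ℝ) (x : Eu n) : ℝ :=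
  V x * |a x| ^ p

variable {n : ℕ} {s p : ℝ}

lemma meas_diff {a : Eu n → ℝ} (ha : Measurable a) :
    Measurable fun z : Eu n × Eu n => a z.1 - a z.2 :=
  (ha.comp measurable_fst).sub (ha.comp measurable_snd)

lemma meas_normpow (c : ℝ) : Measurable fun z : Eu n × Eu n => ‖z.1 - z.2‖ ^ c :=
  ((continuous_fst.sub continuous_snd).norm.measurable).pow measurable_const

lemma meas_kerF {a b : Eu n → ℝ} (ha : Measurable a) (hb : Measurable b) :
    Measurable (kerF n s p a b) :=
  ((((meas_diff ha).abs.pow measurable_const).mul (meas_diff ha)).mul (meas_diff hb)).div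
    (meas_normpow _)

lemma meas_ggF {a : Eu n → ℝ} (ha : Measurable a) : Measurable (ggF n s p a) :=
  ((meas_diff ha).abs.pow measurable_const).div (meas_normpow _)

lemma meas_potF {V a b : Eu n → ℝ} (hV : Measurable V) (ha : Measurable a)
    (hb : Measurable b) : Measurable (potF n p V a b) :=
  (((hV.mul (ha.abs.pow measurable_const))).mul ha).mul hb

lemma meas_ppF {V a : Eu n → ℝ} (hV : Measurable V) (ha : Measurable a) :
    Measurable (ppF n p V a) :=
  hV.mul (ha.abs.pow measurable_const)

lemma ggF_nonneg (a : Eu n → ℝ) (z : Eu n × Eu n) : 0 ≤ ggF n s p a z :=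
  div_nonneg (Real.rpow_nonneg (abs_nonneg _) _) (Real.rpow_nonneg (norm_nonneg _) _)

lemma ppF_nonneg {V : Eu n → ℝ} (hV : ∀ x, 0 ≤ V x) (a : Eu n → ℝ) (x : Eu n) :
    0 ≤ ppF n p V a x :=
  mul_nonneg (hV x) (Real.rpow_nonneg (abs_nonneg _) _)

lemma kerF_abs_le (hp : 2 ≤ p) (a b : Eu n → ℝ) (z : Eu n × Eu n) :
    |kerF n s p a b z| ≤ ggF n s p a z ^ ((p-1)/p) * ggF n s p b z ^ (1/p) :=
  kernel_abs_le hp _ _ _ (Real.rpow_nonneg (norm_nonneg _) _)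

lemma kerF_diag (hp : 2 ≤ p) (a : Eu n → ℝ) : kerF n s p a a = ggF n s p a := by
  funext z
  exact kernel_diag hp _ _

lemma potF_abs_le (hp : 2 ≤ p) {V : Eu n → ℝ} (hV : ∀ x, 0 ≤ V x) (a b : Eu n → ℝ)
    (x : Eu n) :
    |potF n p V a b x| ≤ ppF n p V a x ^ ((p-1)/p) * ppF n p V b x ^ (1/p) :=
  pot_abs_le hp _ _ _ (hV x)

lemma potF_diag (hp : 2 ≤ p) (V a : Eu n → ℝ) : potF n p V a a = ppF n p V a := by
  funext x
  exact pot_diag hp _ _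

lemma kerF_sub (a u v : Eu n → ℝ) (z : Eu n × Eu n) :
    kerF n s p a (u - v) z = kerF n s p a u z - kerF n s p a v z := by
  simp only [kerF, Pi.sub_apply]
  ring

lemma potF_sub (V a u v : Eu n → ℝ) (x : Eu n) :
    potF n p V a (u - v) x = potF n p V a u x - potF n p V a v x := by
  simp only [potF, Pi.sub_apply]
  ring

lemma gagliardo_prod {u : Eu n → ℝ} (hu : Measurable u) :
    gagliardoP n s p u = ∫⁻ z, ENNReal.ofReal (ggF n s p u z) ∂(volume.prod volume) := by
  rw [MeasureTheory.lintegral_prod _ ((meas_ggF hu).ennreal_ofReal.aemeasurable)]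
  rfl

lemma double_int {u w : Eu n → ℝ}
    (hint : Integrable (kerF n s p u w) ((volume : Measure (Eu n)).prod volume)) :
    (∫ x, ∫ y, |u x - u y| ^ (p-2) * (u x - u y) * (w x - w y) / ‖x - y‖ ^ ((n:ℝ) + s * p)) =
      ∫ z, kerF n s p u w z ∂((volume : Measure (Eu n)).prod volume) := by
  exact MeasureTheory.integral_integral (f := fun x y => kerF n s p u w (x, y)) hint

end ApairAux

end

open ApairAux in
/-- monotonicity inequality for the operator `A`. -/
theorem Apair_monotonicity
    (n : ℕ) (s p : ℝ) (V : EuclideanSpace ℝ (Fin n) → ℝ)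
    (hn : 1 ≤ n) (hp : 2 ≤ p) (hs0 : 0 < s) (hs1 : s < 1)
    (hVc : Continuous V) (hV0 : ∀ x, 0 ≤ V x)
    (u v : EuclideanSpace ℝ (Fin n) → ℝ)
    (hu : MemXs n s p V u) (hv : MemXs n s p V v) :
    (normXs n s p V u ^ (p - 1) - normXs n s p V v ^ (p - 1)) *
        (normXs n s p V u - normXs n s p V v) ≤
      Apair n s p V u (u - v) - Apair n s p V v (u - v) := by
  classical
  obtain ⟨hum, -, hGufin, hPuint⟩ := hu
  obtain ⟨hvm, -, hGvfin, hPvint⟩ := hv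
  have hp0 : (0:ℝ) < p := by linarith
  have hpne : p ≠ 0 := ne_of_gt hp0
  have hVm : Measurable V := hVc.measurable
  set pr : Measure (Eu n × Eu n) := (volume : Measure (Eu n)).prod volume with hpr
  -- the four extended-real quantities
  have hGuEq : gagliardoP n s p u = ∫⁻ z, ENNReal.ofReal (ggF n s p u z) ∂pr :=
    gagliardo_prod hum
  have hGvEq : gagliardoP n s p v = ∫⁻ z, ENNReal.ofReal (ggF n s p v z) ∂pr :=
    gagliardo_prod hvm
  have hGune : (∫⁻ z, ENNReal.ofReal (ggF n s p u z) ∂pr) ≠ ⊤ := by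
    rw [← hGuEq]; exact hGufin.ne
  have hGvne : (∫⁻ z, ENNReal.ofReal (ggF n s p v z) ∂pr) ≠ ⊤ := by
    rw [← hGvEq]; exact hGvfin.ne
  have hPune : (∫⁻ x, ENNReal.ofReal (ppF n p V u x)) ≠ ⊤ :=
    ne_of_lt hPuint.lintegral_lt_top
  have hPvne : (∫⁻ x, ENNReal.ofReal (ppF n p V v x)) ≠ ⊤ :=
    ne_of_lt hPvint.lintegral_lt_top
  -- integrability and Hölder bounds for the kernel terms
  obtain ⟨hIuu, -⟩ := integral_bound hp (meas_kerF hum hum) (meas_ggF hum) (meas_ggF hum)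
    (ggF_nonneg u) (ggF_nonneg u) (kerF_abs_le hp u u) hGune hGune
  obtain ⟨hIuv, hBuv⟩ := integral_bound hp (meas_kerF hum hvm) (meas_ggF hum) (meas_ggF hvm)
    (ggF_nonneg u) (ggF_nonneg v) (kerF_abs_le hp u v) hGune hGvne
  obtain ⟨hIvu, hBvu⟩ := integral_bound hp (meas_kerF hvm hum) (meas_ggF hvm) (meas_ggF hum)
    (ggF_nonneg v) (ggF_nonneg u) (kerF_abs_le hp v u) hGvne hGune
  obtain ⟨hIvv, -⟩ := integral_bound hp (meas_kerF hvm hvm) (meas_ggF hvm) (meas_ggF hvm)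
    (ggF_nonneg v) (ggF_nonneg v) (kerF_abs_le hp v v) hGvne hGvne
  -- integrability and Hölder bounds for the potential terms
  obtain ⟨hJuu, -⟩ := integral_bound hp (meas_potF hVm hum hum) (meas_ppF hVm hum)
    (meas_ppF hVm hum) (ppF_nonneg hV0 u) (ppF_nonneg hV0 u) (potF_abs_le hp hV0 u u)
    hPune hPune
  obtain ⟨hJuv, hBpuv⟩ := integral_bound hp (meas_potF hVm hum hvm) (meas_ppF hVm hum)
    (meas_ppF hVm hvm) (ppF_nonneg hV0 u) (ppF_nonneg hV0 v) (potF_abs_le hp hV0 u v)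
    hPune hPvne
  obtain ⟨hJvu, hBpvu⟩ := integral_bound hp (meas_potF hVm hvm hum) (meas_ppF hVm hvm)
    (meas_ppF hVm hum) (ppF_nonneg hV0 v) (ppF_nonneg hV0 u) (potF_abs_le hp hV0 v u)
    hPvne hPune
  obtain ⟨hJvv, -⟩ := integral_bound hp (meas_potF hVm hvm hvm) (meas_ppF hVm hvm)
    (meas_ppF hVm hvm) (ppF_nonneg hV0 v) (ppF_nonneg hV0 v) (potF_abs_le hp hV0 v v)
    hPvne hPvne
  -- values of the diagonal terms
  have hvalKuu : ∫ z, kerF n s p u u z ∂pr =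
      (∫⁻ z, ENNReal.ofReal (ggF n s p u z) ∂pr).toReal := by
    rw [kerF_diag hp u]; exact integral_diag (meas_ggF hum) (ggF_nonneg u)
  have hvalKvv : ∫ z, kerF n s p v v z ∂pr =
      (∫⁻ z, ENNReal.ofReal (ggF n s p v z) ∂pr).toReal := by
    rw [kerF_diag hp v]; exact integral_diag (meas_ggF hvm) (ggF_nonneg v)
  have hvalJuu : ∫ x, potF n p V u u x =
      (∫⁻ x, ENNReal.ofReal (ppF n p V u x)).toReal := by
    rw [potF_diag hp V u]; exact integral_diag (meas_ppF hVm hum) (ppF_nonneg hV0 u)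
  have hvalJvv : ∫ x, potF n p V v v x =
      (∫⁻ x, ENNReal.ofReal (ppF n p V v x)).toReal := by
    rw [potF_diag hp V v]; exact integral_diag (meas_ppF hVm hvm) (ppF_nonneg hV0 v)
  have hpuEq : (∫ x, V x * |u x| ^ p) =
      (∫⁻ x, ENNReal.ofReal (ppF n p V u x)).toReal := by
    rw [show (∫ x, V x * |u x| ^ p) = ∫ x, ppF n p V u x from rfl]
    exact integral_diag (meas_ppF hVm hum) (ppF_nonneg hV0 u)
  have hpvEq : (∫ x, V x * |v x| ^ p) =
      (∫⁻ x, ENNReal.ofReal (ppF n p V v x)).toReal := by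
    rw [show (∫ x, V x * |v x| ^ p) = ∫ x, ppF n p V v x from rfl]
    exact integral_diag (meas_ppF hVm hvm) (ppF_nonneg hV0 v)
  -- abbreviations for the real quantities
  set gu := (∫⁻ z, ENNReal.ofReal (ggF n s p u z) ∂pr).toReal with hgu
  set gv := (∫⁻ z, ENNReal.ofReal (ggF n s p v z) ∂pr).toReal with hgv
  set pu := (∫⁻ x, ENNReal.ofReal (ppF n p V u x)).toReal with hpu
  set pv := (∫⁻ x, ENNReal.ofReal (ppF n p V v x)).toReal with hpv
  have hgu0 : 0 ≤ gu := ENNReal.toReal_nonneg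
  have hgv0 : 0 ≤ gv := ENNReal.toReal_nonneg
  have hpu0 : 0 ≤ pu := ENNReal.toReal_nonneg
  have hpv0 : 0 ≤ pv := ENNReal.toReal_nonneg
  -- decomposition of the two pairings
  have hkerUuv : Integrable (kerF n s p u (u - v)) pr := by
    rw [show kerF n s p u (u - v) = (fun z => kerF n s p u u z - kerF n s p u v z) from
      funext (kerF_sub u u v)]
    exact hIuu.sub hIuv
  have hkerVuv : Integrable (kerF n s p v (u - v)) pr := by
    rw [show kerF n s p v (u - v) = (fun z => kerF n s p v u z - kerF n s p v v z) from
      funext (kerF_sub v u v)]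
    exact hIvu.sub hIvv
  have hApu : Apair n s p V u (u - v) =
      (gu - ∫ z, kerF n s p u v z ∂pr) + (pu - ∫ x, potF n p V u v x) := by
    unfold Apair
    rw [double_int hkerUuv]
    rw [show kerF n s p u (u - v) = (fun z => kerF n s p u u z - kerF n s p u v z) from
      funext (kerF_sub u u v), integral_sub hIuu hIuv, hvalKuu]
    rw [show (∫ x, V x * |u x| ^ (p - 2) * u x * (u - v) x) =
        ∫ x, potF n p V u (u - v) x from rfl]
    rw [show potF n p V u (u - v) = (fun x => potF n p V u u x - potF n p V u v x) from
      funext (potF_sub V u u v), integral_sub hJuu hJuv, hvalJuu]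
  have hApv : Apair n s p V v (u - v) =
      ((∫ z, kerF n s p v u z ∂pr) - gv) + ((∫ x, potF n p V v u x) - pv) := by
    unfold Apair
    rw [double_int hkerVuv]
    rw [show kerF n s p v (u - v) = (fun z => kerF n s p v u z - kerF n s p v v z) from
      funext (kerF_sub v u v), integral_sub hIvu hIvv, hvalKvv]
    rw [show (∫ x, V x * |v x| ^ (p - 2) * v x * (u - v) x) =
        ∫ x, potF n p V v (u - v) x from rfl]
    rw [show potF n p V v (u - v) = (fun x => potF n p V v u x - potF n p V v v x) from
      funext (potF_sub V v u v), integral_sub hJvu hJvv, hvalJvv]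
  -- norms
  have hNu : normXs n s p V u = (gu + pu) ^ (1 / p) := by
    unfold normXs
    rw [hGuEq, hpuEq]
  have hNv : normXs n s p V v = (gv + pv) ^ (1 / p) := by
    unfold normXs
    rw [hGvEq, hpvEq]
  set a := gu + pu with haDef
  set b := gv + pv with hbDef
  have ha : 0 ≤ a := add_nonneg hgu0 hpu0
  have hb : 0 ≤ b := add_nonneg hgv0 hpv0
  have hsum : (p-1)/p + 1/p = 1 := by field_simp; ring
  have hE1a : (a ^ ((1:ℝ) / p)) ^ (p - 1) = a ^ ((p-1)/p) := by
    rw [← Real.rpow_mul ha]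
    congr 1
    field_simp
  have hE1b : (b ^ ((1:ℝ) / p)) ^ (p - 1) = b ^ ((p-1)/p) := by
    rw [← Real.rpow_mul hb]
    congr 1
    field_simp
  have hE2a : a ^ ((p-1)/p) * a ^ ((1:ℝ)/p) = a := by
    rw [← Real.rpow_add' ha (by rw [hsum]; norm_num), hsum, Real.rpow_one]
  have hE2b : b ^ ((p-1)/p) * b ^ ((1:ℝ)/p) = b := by
    rw [← Real.rpow_add' hb (by rw [hsum]; norm_num), hsum, Real.rpow_one]
  have hH1 : gu ^ ((p-1)/p) * gv ^ (1/p) + pu ^ ((p-1)/p) * pv ^ (1/p) ≤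
      a ^ ((p-1)/p) * b ^ (1/p) := holder_two hp hgu0 hgv0 hpu0 hpv0
  have hH2 : gv ^ ((p-1)/p) * gu ^ (1/p) + pv ^ ((p-1)/p) * pu ^ (1/p) ≤
      b ^ ((p-1)/p) * a ^ (1/p) := holder_two hp hgv0 hgu0 hpv0 hpu0
  rw [hApu, hApv, hNu, hNv, hE1a, hE1b]
  have hexp : (a ^ ((p-1)/p) - b ^ ((p-1)/p)) * (a ^ ((1:ℝ)/p) - b ^ ((1:ℝ)/p)) =
      a ^ ((p-1)/p) * a ^ ((1:ℝ)/p) + b ^ ((p-1)/p) * b ^ ((1:ℝ)/p) -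
        (a ^ ((p-1)/p) * b ^ ((1:ℝ)/p) + b ^ ((p-1)/p) * a ^ ((1:ℝ)/p)) := by ring
  rw [hexp, hE2a, hE2b]
  linarith [hBuv, hBvu, hBpuv, hBpvu, hH1, hH2]
end

section
/- Let n ≥ 1, p ≥ 2, 0 < s < 1, and let V : ℝ^n → ℝ be continuous with V ≥ 0. Let (u_k) be a sequence in X^s and u ∈ X^s such that ⟨A(u_k) − A(u), u_k − u⟩ → 0 as k → ∞, where ⟨A(u_k) − A(u), u_k − u⟩ = ⟨A(u_k), u_k − u⟩ − ⟨A(u), u_k − u⟩. Then ‖u_k‖_{X^s} → ‖u‖_{X^s}. -/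
open MeasureTheory Real Filter
open scoped ENNReal NNReal

noncomputable section NormConvAux


lemma rpow_succ_abs {q : ℝ} (hq : q ≠ 0) (hq1 : q + 1 ≠ 0) (a : ℝ) :
    |a| ^ q * |a| = |a| ^ (q + 1) := by
  rcases eq_or_ne a 0 with h't | h't
  · simp [h't, Real.zero_rpow hq, Real.zero_rpow hq1]
  · have ht : (0:ℝ) < |a| := abs_pos.mpr h't
    calc |a| ^ q * |a| = |a| ^ q * |a| ^ (1:ℝ) := by rw [Real.rpow_one]
      _ = |a| ^ (q + 1) := (Real.rpow_add ht _ _).symm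

lemma abs_phi_full (p : ℝ) (hp : 2 ≤ p) (t : ℝ) : |(|t| ^ (p-2) * t)| = |t| ^ (p-1) := by
  rw [abs_mul, abs_of_nonneg (Real.rpow_nonneg (abs_nonneg t) (p-2))]
  rcases eq_or_ne t 0 with h | h
  · simp [h, Real.zero_rpow (by linarith : p - 1 ≠ 0)]
  · have ht : (0:ℝ) < |t| := abs_pos.mpr h
    calc |t| ^ (p-2) * |t| = |t| ^ (p-2) * |t| ^ (1:ℝ) := by rw [Real.rpow_one]
      _ = |t| ^ (p-2+1) := (Real.rpow_add ht _ _).symm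
      _ = |t| ^ (p-1) := by ring_nf

lemma young_abs (p : ℝ) (hp : 2 ≤ p) (a c : ℝ) : |a| ^ (p-1) * |c| ≤ |a| ^ p + |c| ^ p := by
  have e : ∀ x : ℝ, |x| ^ (p-1) * |x| = |x| ^ p := by
    intro x
    have := rpow_succ_abs (q := p-1) (by linarith) (by linarith) x
    rwa [show p - 1 + 1 = p by ring] at this
  rcases le_total |c| |a| with h | h
  · have h1 : |a| ^ (p-1) * |c| ≤ |a| ^ (p-1) * |a| :=
      mul_le_mul_of_nonneg_left h (Real.rpow_nonneg (abs_nonneg a) _)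
    rw [e a] at h1
    nlinarith [Real.rpow_nonneg (abs_nonneg c) p]
  · have h1 : |a| ^ (p-1) ≤ |c| ^ (p-1) := Real.rpow_le_rpow (abs_nonneg a) h (by linarith)
    have h2 : |a| ^ (p-1) * |c| ≤ |c| ^ (p-1) * |c| :=
      mul_le_mul h1 le_rfl (abs_nonneg c) (Real.rpow_nonneg (abs_nonneg c) _)
    rw [e c] at h2
    nlinarith [Real.rpow_nonneg (abs_nonneg a) p]

lemma half_ineq (p : ℝ) (hp : 2 ≤ p) {a b : ℝ} (hab : b ≤ a) :
    (|a| ^ (p-2) + |b| ^ (p-2)) * (a - b) ≤ 2 * (|a| ^ (p-2) * a - |b| ^ (p-2) * b) := by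
  rcases le_total 0 (a + b) with h | h
  · have hba : |b| ≤ |a| := by rw [← sq_le_sq]; nlinarith
    have := Real.rpow_le_rpow (abs_nonneg b) hba (by linarith : (0:ℝ) ≤ p - 2)
    nlinarith
  · have hba : |a| ≤ |b| := by rw [← sq_le_sq]; nlinarith
    have := Real.rpow_le_rpow (abs_nonneg a) hba (by linarith : (0:ℝ) ≤ p - 2)
    nlinarith

lemma mono_ineq (p : ℝ) (hp : 2 ≤ p) (a b : ℝ) :
    |a - b| ^ p ≤ 2 ^ (p-1) * ((|a| ^ (p-2) * a - |b| ^ (p-2) * b) * (a - b)) := by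
  have main : ∀ a b : ℝ, b ≤ a →
      |a - b| ^ p ≤ 2 ^ (p-1) * ((|a| ^ (p-2) * a - |b| ^ (p-2) * b) * (a - b)) := by
    intro a b hab
    rcases eq_or_lt_of_le hab with rfl | hlt
    · simp [Real.zero_rpow (by linarith : p ≠ 0)]
    · have hab0 : (0:ℝ) < a - b := by linarith
      have habs : |a - b| = a - b := abs_of_pos hab0
      set M : ℝ := |a| ^ (p-2) + |b| ^ (p-2) with hM
      have hMnn : 0 ≤ M := by positivity
      have step1 : |a - b| ^ (p-2) ≤ 2 ^ (p-2) * M := by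
        have h1 : |a - b| ≤ |a| + |b| := abs_sub a b
        have h2 : |a - b| ^ (p-2) ≤ (|a| + |b|) ^ (p-2) :=
          Real.rpow_le_rpow (abs_nonneg _) h1 (by linarith)
        have h3 : |a| + |b| ≤ 2 * max |a| |b| := by
          rcases le_total |a| |b| with h | h
          · simp [max_eq_right h]; linarith
          · simp [max_eq_left h]; linarith
        have h4 : (|a| + |b|) ^ (p-2) ≤ (2 * max |a| |b|) ^ (p-2) :=
          Real.rpow_le_rpow (by positivity) h3 (by linarith)
        have h5 : (2 * max |a| |b|) ^ (p-2) = 2 ^ (p-2) * (max |a| |b|) ^ (p-2) :=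
          Real.mul_rpow (by norm_num) (le_max_iff.mpr (Or.inl (abs_nonneg a)))
        have h6 : (max |a| |b|) ^ (p-2) ≤ M := by
          rcases le_total |a| |b| with h | h
          · rw [max_eq_right h, hM]; nlinarith [Real.rpow_nonneg (abs_nonneg a) (p-2)]
          · rw [max_eq_left h]; rw [hM]; nlinarith [Real.rpow_nonneg (abs_nonneg b) (p-2)]
        calc |a - b| ^ (p-2) ≤ (2 * max |a| |b|) ^ (p-2) := le_trans h2 h4
          _ = 2 ^ (p-2) * (max |a| |b|) ^ (p-2) := h5
          _ ≤ 2 ^ (p-2) * M := by nlinarith [Real.rpow_le_rpow (le_of_lt (by norm_num : (0:ℝ) < 2)) (le_refl (2:ℝ)) (by linarith : (0:ℝ) ≤ p-2), Real.rpow_nonneg (by norm_num : (0:ℝ) ≤ 2) (p-2)]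
      have step2 : |a - b| ^ p = |a - b| ^ (p-2) * (a - b) ^ 2 := by
        have h0 : (0:ℝ) < |a - b| := by rw [habs]; exact hab0
        calc |a - b| ^ p = |a - b| ^ ((p-2) + 2) := by ring_nf
          _ = |a - b| ^ (p-2) * |a - b| ^ (2:ℝ) := Real.rpow_add h0 _ _
          _ = |a - b| ^ (p-2) * (a - b) ^ 2 := by
              rw [show ((2:ℝ)) = ((2:ℕ):ℝ) by norm_num, Real.rpow_natCast, sq_abs]
      have step3 : M * (a - b) ≤ 2 * (|a| ^ (p-2) * a - |b| ^ (p-2) * b) := half_ineq p hp hab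
      have h2pos : (0:ℝ) < 2 ^ (p-2) := Real.rpow_pos_of_pos (by norm_num) _
      have e : (2:ℝ) ^ (p-2) * 2 = 2 ^ (p-1) := by
        calc (2:ℝ) ^ (p-2) * 2 = 2 ^ (p-2) * 2 ^ (1:ℝ) := by rw [Real.rpow_one]
          _ = 2 ^ ((p-2) + 1) := (Real.rpow_add (by norm_num) _ _).symm
          _ = 2 ^ (p-1) := by ring_nf
      calc |a - b| ^ p = |a - b| ^ (p-2) * (a - b) ^ 2 := step2
        _ ≤ (2 ^ (p-2) * M) * (a - b) ^ 2 := by nlinarith [sq_nonneg (a-b), Real.rpow_nonneg (abs_nonneg (a-b)) (p-2)]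
        _ = 2 ^ (p-2) * ((M * (a - b)) * (a - b)) := by ring
        _ ≤ 2 ^ (p-2) * ((2 * (|a| ^ (p-2) * a - |b| ^ (p-2) * b)) * (a - b)) := by
            apply mul_le_mul_of_nonneg_left _ (le_of_lt h2pos)
            exact mul_le_mul_of_nonneg_right step3 (le_of_lt hab0)
        _ = 2 ^ (p-1) * ((|a| ^ (p-2) * a - |b| ^ (p-2) * b) * (a - b)) := by
            rw [← e]; ring
  rcases le_total b a with h | h
  · exact main a b h
  · have := main b a h
    have e1 : |b - a| = |a - b| := abs_sub_comm b a
    rw [e1] at this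
    calc |a - b| ^ p ≤ 2 ^ (p-1) * ((|b| ^ (p-2) * b - |a| ^ (p-2) * a) * (b - a)) := this
      _ = 2 ^ (p-1) * ((|a| ^ (p-2) * a - |b| ^ (p-2) * b) * (a - b)) := by ring

lemma mono_nonneg (p : ℝ) (hp : 2 ≤ p) (a b : ℝ) :
    0 ≤ (|a| ^ (p-2) * a - |b| ^ (p-2) * b) * (a - b) := by
  have h := mono_ineq p hp a b
  have h0 : (0:ℝ) ≤ |a - b| ^ p := Real.rpow_nonneg (abs_nonneg _) p
  have h2 : (0:ℝ) < 2 ^ (p-1) := Real.rpow_pos_of_pos (by norm_num) _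
  nlinarith

variable {n : ℕ} {s p : ℝ}

def kernD (n : ℕ) (s p : ℝ) : (EuclideanSpace ℝ (Fin n) × EuclideanSpace ℝ (Fin n)) → ℝ≥0∞ :=
  fun z => ENNReal.ofReal (1 / ‖z.1 - z.2‖ ^ ((n : ℝ) + s * p))

def muG (n : ℕ) (s p : ℝ) : Measure (EuclideanSpace ℝ (Fin n) × EuclideanSpace ℝ (Fin n)) :=
  (volume.prod volume).withDensity (kernD n s p)

def nuV (n : ℕ) (V : EuclideanSpace ℝ (Fin n) → ℝ) : Measure (EuclideanSpace ℝ (Fin n)) :=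
  volume.withDensity (fun x => ENNReal.ofReal (V x))

lemma measurable_kern : Measurable (fun z : EuclideanSpace ℝ (Fin n) × EuclideanSpace ℝ (Fin n) =>
    ‖z.1 - z.2‖ ^ ((n:ℝ) + s*p)) :=
  ((continuous_fst.sub continuous_snd).norm.measurable).pow measurable_const

lemma measurable_kernD : Measurable (kernD n s p) :=
  (measurable_const.div measurable_kern).ennreal_ofReal

lemma dens_eq (hp0 : 0 < p) (r : ℝ) (z : EuclideanSpace ℝ (Fin n) × EuclideanSpace ℝ (Fin n)) :
    ENNReal.ofReal (|r| ^ p / ‖z.1 - z.2‖ ^ ((n:ℝ)+s*p)) = (kernD n s p z * (‖r‖₊ : ℝ≥0∞) ^ p) := by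
  have hK : 0 ≤ 1 / ‖z.1 - z.2‖ ^ ((n:ℝ)+s*p) := by positivity
  have e : |r| ^ p / ‖z.1 - z.2‖ ^ ((n:ℝ)+s*p)
      = (1 / ‖z.1 - z.2‖ ^ ((n:ℝ)+s*p)) * |r| ^ p := by ring
  rw [e, ENNReal.ofReal_mul hK, kernD]
  congr 1
  rw [show ((‖r‖₊ : ℝ≥0∞)) = ENNReal.ofReal |r| from Real.enorm_eq_ofReal_abs r, ← ENNReal.ofReal_rpow_of_nonneg (abs_nonneg r) hp0.le]

lemma measurable_pair_sub {u : EuclideanSpace ℝ (Fin n) → ℝ} (hu : Measurable u) :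
    Measurable (fun z : EuclideanSpace ℝ (Fin n) × EuclideanSpace ℝ (Fin n) => u z.1 - u z.2) :=
  (hu.comp measurable_fst).sub (hu.comp measurable_snd)

lemma gag_prod (hu : Measurable u) :
    gagliardoP n s p u = ∫⁻ z, ENNReal.ofReal
      (|u z.1 - u z.2| ^ p / ‖z.1 - z.2‖ ^ ((n:ℝ)+s*p)) ∂(volume.prod volume) := by
  rw [gagliardoP]
  exact lintegral_lintegral
    ((((measurable_pair_sub hu).abs.pow measurable_const).div measurable_kern).ennreal_ofReal).aemeasurable

lemma gag_repr (hp0 : 0 < p) {u : EuclideanSpace ℝ (Fin n) → ℝ} (hu : Measurable u) :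
    gagliardoP n s p u = ∫⁻ z, (‖u z.1 - u z.2‖₊ : ℝ≥0∞) ^ p ∂(muG n s p) := by
  rw [muG, lintegral_withDensity_eq_lintegral_mul _ measurable_kernD
    (((measurable_pair_sub hu).nnnorm.coe_nnreal_ennreal).pow measurable_const), gag_prod hu]
  exact lintegral_congr fun z => dens_eq hp0 _ z

lemma nuV_repr (hp0 : 0 < p) {V u : EuclideanSpace ℝ (Fin n) → ℝ} (hV : Measurable V)
    (hV0 : ∀ x, 0 ≤ V x) (hu : Measurable u) :
    ∫⁻ x, (‖u x‖₊ : ℝ≥0∞) ^ p ∂(nuV n V) = ∫⁻ x, ENNReal.ofReal (V x * |u x| ^ p) := by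
  rw [nuV, lintegral_withDensity_eq_lintegral_mul _ hV.ennreal_ofReal
    ((hu.nnnorm.coe_nnreal_ennreal).pow measurable_const)]
  refine lintegral_congr fun x => ?_
  simp only [Pi.mul_apply]
  rw [ENNReal.ofReal_mul (hV0 x), show ((‖u x‖₊ : ℝ≥0∞)) = ENNReal.ofReal |u x| from Real.enorm_eq_ofReal_abs (u x),
    ← ENNReal.ofReal_rpow_of_nonneg (abs_nonneg _) hp0.le]

lemma lp_tendsto {α : Type*} [MeasurableSpace α] (μ : Measure α) (p : ℝ) (hp : 1 ≤ p)
    (F : ℕ → α → ℝ) (G : α → ℝ) (hF : ∀ k, Measurable (F k)) (hG : Measurable G)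
    (hfin : ∀ k, (∫⁻ x, (‖F k x‖₊ : ℝ≥0∞) ^ p ∂μ) ≠ ⊤)
    (hgfin : (∫⁻ x, (‖G x‖₊ : ℝ≥0∞) ^ p ∂μ) ≠ ⊤)
    (hdiff : Tendsto (fun k => ∫⁻ x, (‖F k x - G x‖₊ : ℝ≥0∞) ^ p ∂μ) atTop (nhds 0)) :
    Tendsto (fun k => (∫⁻ x, (‖F k x‖₊ : ℝ≥0∞) ^ p ∂μ).toReal) atTop
      (nhds ((∫⁻ x, (‖G x‖₊ : ℝ≥0∞) ^ p ∂μ).toReal)) := by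
  have hp0 : 0 < p := lt_of_lt_of_le one_pos hp
  set q : ℝ≥0∞ := ENNReal.ofReal p with hq
  have hq0 : q ≠ 0 := (ENNReal.ofReal_pos.mpr hp0).ne'
  have hqt : q ≠ ⊤ := ENNReal.ofReal_ne_top
  have hqr : q.toReal = p := ENNReal.toReal_ofReal hp0.le
  have hq1 : 1 ≤ q := by
    rw [hq, ← ENNReal.ofReal_one]
    exact ENNReal.ofReal_le_ofReal hp
  have repr : ∀ f : α → ℝ, eLpNorm f q μ = (∫⁻ x, (‖f x‖₊ : ℝ≥0∞) ^ p ∂μ) ^ (1/p) := by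
    intro f
    simp only [eLpNorm_eq_lintegral_rpow_enorm_toReal hq0 hqt, hqr, enorm_eq_nnnorm]
  have tri1 : ∀ k, (∫⁻ x, (‖F k x‖₊ : ℝ≥0∞) ^ p ∂μ) ^ (1/p) ≤
      (∫⁻ x, (‖G x‖₊ : ℝ≥0∞) ^ p ∂μ) ^ (1/p) +
      (∫⁻ x, (‖F k x - G x‖₊ : ℝ≥0∞) ^ p ∂μ) ^ (1/p) := by
    intro k
    rw [← repr, ← repr, ← repr]
    have e : F k = fun x => G x + (F k x - G x) := by funext x; ring
    nth_rewrite 1 [e]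
    exact eLpNorm_add_le hG.aestronglyMeasurable ((hF k).sub hG).aestronglyMeasurable hq1
  have tri2 : ∀ k, (∫⁻ x, (‖G x‖₊ : ℝ≥0∞) ^ p ∂μ) ^ (1/p) ≤
      (∫⁻ x, (‖F k x‖₊ : ℝ≥0∞) ^ p ∂μ) ^ (1/p) +
      (∫⁻ x, (‖F k x - G x‖₊ : ℝ≥0∞) ^ p ∂μ) ^ (1/p) := by
    intro k
    rw [← repr, ← repr, ← repr]
    have e : G = fun x => F k x + (-(F k x - G x)) := by funext x; ring
    have h1 : eLpNorm G q μ ≤ eLpNorm (F k) q μ + eLpNorm (fun x => -(F k x - G x)) q μ := by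
      nth_rewrite 1 [e]
      exact eLpNorm_add_le (hF k).aestronglyMeasurable
        (((hF k).sub hG).neg).aestronglyMeasurable hq1
    have e2 : eLpNorm (fun x => -(F k x - G x)) q μ = eLpNorm (fun x => F k x - G x) q μ :=
      eLpNorm_neg ..
    rwa [e2] at h1
  have hCk : Tendsto (fun k => (∫⁻ x, (‖F k x - G x‖₊ : ℝ≥0∞) ^ p ∂μ) ^ (1/p)) atTop (nhds 0) := by
    have h2 := ((ENNReal.continuous_rpow_const (y := 1/p)).tendsto 0).comp hdiff
    have h3 : (0:ℝ≥0∞) ^ ((1:ℝ)/p) = 0 := ENNReal.zero_rpow_of_pos (by positivity)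
    rw [h3] at h2
    exact h2
  set A : ℕ → ℝ≥0∞ := fun k => (∫⁻ x, (‖F k x‖₊ : ℝ≥0∞) ^ p ∂μ) ^ (1/p) with hA
  set B : ℝ≥0∞ := (∫⁻ x, (‖G x‖₊ : ℝ≥0∞) ^ p ∂μ) ^ (1/p) with hB
  have hBt : B ≠ ⊤ := ENNReal.rpow_ne_top_of_nonneg (by positivity) hgfin
  have hup : Tendsto (fun k => B + (∫⁻ x, (‖F k x - G x‖₊ : ℝ≥0∞) ^ p ∂μ) ^ (1/p))
      atTop (nhds B) := by
    have := Tendsto.add (tendsto_const_nhds (x := B) (f := atTop)) hCk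
    simpa using this
  have hlo : Tendsto (fun k => B - (∫⁻ x, (‖F k x - G x‖₊ : ℝ≥0∞) ^ p ∂μ) ^ (1/p))
      atTop (nhds B) := by
    have := ENNReal.Tendsto.sub (tendsto_const_nhds (x := B) (f := atTop)) hCk (Or.inl hBt)
    simpa using this
  have hAB : Tendsto A atTop (nhds B) := by
    refine tendsto_of_tendsto_of_tendsto_of_le_of_le hlo hup ?_ ?_
    · intro k; exact tsub_le_iff_right.mpr (tri2 k)
    · intro k; exact tri1 k
  have hback : ∀ x : ℝ≥0∞, (x ^ ((1:ℝ)/p)) ^ p = x := by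
    intro x
    rw [← ENNReal.rpow_mul, one_div_mul_cancel hp0.ne', ENNReal.rpow_one]
  have hABp : Tendsto (fun k => (A k) ^ p) atTop (nhds (B ^ p)) :=
    ((ENNReal.continuous_rpow_const (y := p)).tendsto B).comp hAB
  rw [hB, hback] at hABp
  have hfinal : Tendsto (fun k => ((A k) ^ p).toReal) atTop
      (nhds ((∫⁻ x, (‖G x‖₊ : ℝ≥0∞) ^ p ∂μ).toReal)) :=
    (ENNReal.tendsto_toReal hgfin).comp hABp
  convert hfinal using 2 with k
  rw [hA, hback]

section part2
variable {n : ℕ} {s p : ℝ}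

lemma abs_phi (p : ℝ) (hp : 2 ≤ p) (t : ℝ) : |t| ^ (p-2) * |t| = |t| ^ (p-1) := by
  rw [← abs_phi_full p hp t, abs_mul, abs_of_nonneg (Real.rpow_nonneg (abs_nonneg t) _)]

lemma mydiv {a b c : ℝ} (h : a ≤ b) (hc : 0 ≤ c) : a / c ≤ b / c := by
  rcases eq_or_lt_of_le hc with h0 | h0
  · simp [← h0]
  · exact (div_le_div_iff_of_pos_right h0).mpr h

lemma abs_sub_rpow_le {q : ℝ} (hq : 0 ≤ q) (a b : ℝ) :
    |a - b| ^ q ≤ 2 ^ q * (|a| ^ q + |b| ^ q) := by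
  have h1 : |a - b| ≤ |a| + |b| := abs_sub a b
  have h2 : |a - b| ^ q ≤ (|a| + |b|) ^ q :=
    Real.rpow_le_rpow (abs_nonneg _) h1 hq
  have h3 : |a| + |b| ≤ 2 * max |a| |b| := by
    rcases le_total |a| |b| with h | h
    · simp [max_eq_right h]; linarith
    · simp [max_eq_left h]; linarith
  have h4 : (|a| + |b|) ^ q ≤ (2 * max |a| |b|) ^ q :=
    Real.rpow_le_rpow (by positivity) h3 hq
  have h5 : (2 * max |a| |b|) ^ q = 2 ^ q * (max |a| |b|) ^ q :=
    Real.mul_rpow (by norm_num) (le_max_iff.mpr (Or.inl (abs_nonneg a)))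
  have h6 : (max |a| |b|) ^ q ≤ |a| ^ q + |b| ^ q := by
    rcases le_total |a| |b| with h | h
    · rw [max_eq_right h]; nlinarith [Real.rpow_nonneg (abs_nonneg a) q]
    · rw [max_eq_left h]; nlinarith [Real.rpow_nonneg (abs_nonneg b) q]
  have h7 : (0:ℝ) ≤ 2 ^ q := Real.rpow_nonneg (by norm_num) q
  calc |a - b| ^ q ≤ (2 * max |a| |b|) ^ q := le_trans h2 h4
    _ = 2 ^ q * (max |a| |b|) ^ q := h5
    _ ≤ 2 ^ q * (|a| ^ q + |b| ^ q) := mul_le_mul_of_nonneg_left h6 h7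

def g1 (n : ℕ) (s p : ℝ) (a v : EuclideanSpace ℝ (Fin n) → ℝ) :
    EuclideanSpace ℝ (Fin n) × EuclideanSpace ℝ (Fin n) → ℝ :=
  fun z => |a z.1 - a z.2| ^ (p-2) * (a z.1 - a z.2) * (v z.1 - v z.2) /
    ‖z.1 - z.2‖ ^ ((n:ℝ) + s * p)

lemma measurable_g1 {a v : EuclideanSpace ℝ (Fin n) → ℝ} (ha : Measurable a) (hv : Measurable v) :
    Measurable (g1 n s p a v) :=
  ((((measurable_pair_sub ha).abs.pow measurable_const).mul (measurable_pair_sub ha)).mul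
    (measurable_pair_sub hv)).div measurable_kern

lemma g1_integrable (hp : 2 ≤ p) {a v : EuclideanSpace ℝ (Fin n) → ℝ}
    (ha : Measurable a) (hv : Measurable v)
    (hga : gagliardoP n s p a ≠ ⊤) (hgv : gagliardoP n s p v ≠ ⊤) :
    Integrable (g1 n s p a v) (volume.prod volume) := by
  constructor
  · exact (measurable_g1 ha hv).aestronglyMeasurable
  · rw [hasFiniteIntegral_iff_norm]
    have hbound : ∀ z : EuclideanSpace ℝ (Fin n) × EuclideanSpace ℝ (Fin n),
        ENNReal.ofReal ‖g1 n s p a v z‖ ≤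
        ENNReal.ofReal (|a z.1 - a z.2| ^ p / ‖z.1 - z.2‖ ^ ((n:ℝ)+s*p)) +
        ENNReal.ofReal (|v z.1 - v z.2| ^ p / ‖z.1 - z.2‖ ^ ((n:ℝ)+s*p)) := by
      intro z
      set K := ‖z.1 - z.2‖ ^ ((n:ℝ)+s*p) with hK
      have hKnn : 0 ≤ K := Real.rpow_nonneg (norm_nonneg _) _
      have h1 : ‖g1 n s p a v z‖ = |a z.1 - a z.2| ^ (p-1) * |v z.1 - v z.2| / K := by
        rw [Real.norm_eq_abs, g1, abs_div, abs_of_nonneg hKnn, abs_mul, abs_mul,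
          abs_of_nonneg (Real.rpow_nonneg (abs_nonneg _) _), abs_phi p hp]
      rw [h1, ← ENNReal.ofReal_add (by positivity) (by positivity), ← add_div]
      exact ENNReal.ofReal_le_ofReal (mydiv (young_abs p hp _ _) hKnn)
    calc ∫⁻ z, ENNReal.ofReal ‖g1 n s p a v z‖ ∂(volume.prod volume)
        ≤ ∫⁻ z, (ENNReal.ofReal (|a z.1 - a z.2| ^ p / ‖z.1 - z.2‖ ^ ((n:ℝ)+s*p)) +
          ENNReal.ofReal (|v z.1 - v z.2| ^ p / ‖z.1 - z.2‖ ^ ((n:ℝ)+s*p)))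
            ∂(volume.prod volume) := lintegral_mono hbound
      _ = gagliardoP n s p a + gagliardoP n s p v := by
          rw [lintegral_add_left (f := fun z : EuclideanSpace ℝ (Fin n) × EuclideanSpace ℝ (Fin n) => ENNReal.ofReal (|a z.1 - a z.2| ^ p / ‖z.1 - z.2‖ ^ ((n:ℝ)+s*p))) (((measurable_pair_sub ha).abs.pow
            measurable_const).div measurable_kern).ennreal_ofReal,
            gag_prod ha, gag_prod hv]
      _ < ⊤ := by
          rw [ENNReal.add_lt_top]
          exact ⟨hga.lt_top, hgv.lt_top⟩

lemma double_int_eq {a vv : EuclideanSpace ℝ (Fin n) → ℝ}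
    (hint : Integrable (g1 n s p a vv) (volume.prod volume)) :
    (∫ x, ∫ y, |a x - a y| ^ (p - 2) * (a x - a y) * (vv x - vv y) /
      ‖x - y‖ ^ ((n : ℝ) + s * p)) = ∫ z, g1 n s p a vv z ∂(volume.prod volume) :=
  integral_integral hint

lemma gag_fin_sub (hp1 : 1 ≤ p) {a b : EuclideanSpace ℝ (Fin n) → ℝ}
    (ha : Measurable a) (hb : Measurable b)
    (hga : gagliardoP n s p a ≠ ⊤) (hgb : gagliardoP n s p b ≠ ⊤) :
    gagliardoP n s p (a - b) ≠ ⊤ := by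
  rw [gag_prod (u := a - b) (ha.sub hb)]
  have hbound : ∀ z : EuclideanSpace ℝ (Fin n) × EuclideanSpace ℝ (Fin n),
      ENNReal.ofReal (|(a - b) z.1 - (a - b) z.2| ^ p / ‖z.1 - z.2‖ ^ ((n:ℝ)+s*p)) ≤
      ENNReal.ofReal ((2:ℝ) ^ p) *
        (ENNReal.ofReal (|a z.1 - a z.2| ^ p / ‖z.1 - z.2‖ ^ ((n:ℝ)+s*p)) +
         ENNReal.ofReal (|b z.1 - b z.2| ^ p / ‖z.1 - z.2‖ ^ ((n:ℝ)+s*p))) := by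
    intro z
    set K := ‖z.1 - z.2‖ ^ ((n:ℝ)+s*p) with hK
    have hKnn : 0 ≤ K := Real.rpow_nonneg (norm_nonneg _) _
    have e0 : (a - b) z.1 - (a - b) z.2 = (a z.1 - a z.2) - (b z.1 - b z.2) := by
      simp only [Pi.sub_apply]; ring
    have h1 : |(a - b) z.1 - (a - b) z.2| ^ p / K ≤
        (2 ^ p * (|a z.1 - a z.2| ^ p + |b z.1 - b z.2| ^ p)) / K := by
      apply mydiv _ hKnn
      rw [e0]
      exact abs_sub_rpow_le (by linarith) _ _
    have h2 : (2 ^ p * (|a z.1 - a z.2| ^ p + |b z.1 - b z.2| ^ p)) / K =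
        2 ^ p * (|a z.1 - a z.2| ^ p / K + |b z.1 - b z.2| ^ p / K) := by ring
    calc ENNReal.ofReal (|(a - b) z.1 - (a - b) z.2| ^ p / K)
        ≤ ENNReal.ofReal (2 ^ p * (|a z.1 - a z.2| ^ p / K + |b z.1 - b z.2| ^ p / K)) := by
          rw [← h2]; exact ENNReal.ofReal_le_ofReal h1
      _ = ENNReal.ofReal ((2:ℝ) ^ p) *
            (ENNReal.ofReal (|a z.1 - a z.2| ^ p / K) + ENNReal.ofReal (|b z.1 - b z.2| ^ p / K)) := by
          rw [ENNReal.ofReal_mul (by positivity), ENNReal.ofReal_add (by positivity) (by positivity)]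
  refine ne_top_of_le_ne_top ?_ (lintegral_mono hbound)
  rw [lintegral_const_mul' _ _ ENNReal.ofReal_ne_top,
    lintegral_add_left (f := fun z : EuclideanSpace ℝ (Fin n) × EuclideanSpace ℝ (Fin n) => ENNReal.ofReal (|a z.1 - a z.2| ^ p / ‖z.1 - z.2‖ ^ ((n:ℝ)+s*p))) (((measurable_pair_sub ha).abs.pow measurable_const).div
      measurable_kern).ennreal_ofReal, ← gag_prod ha, ← gag_prod hb]
  exact ENNReal.mul_ne_top ENNReal.ofReal_ne_top (ENNReal.add_ne_top.mpr ⟨hga, hgb⟩)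
end part2

section part3
variable {n : ℕ} {s p : ℝ}

lemma T_integrable (hp : 2 ≤ p) {V a f g : EuclideanSpace ℝ (Fin n) → ℝ}
    (hV : Measurable V) (hV0 : ∀ x, 0 ≤ V x)
    (ha : Measurable a) (hf : Measurable f) (hg : Measurable g)
    (hia : Integrable (fun x => V x * |a x| ^ p))
    (hif : Integrable (fun x => V x * |f x| ^ p))
    (hig : Integrable (fun x => V x * |g x| ^ p)) :
    Integrable (fun x => V x * |a x| ^ (p-2) * a x * ((f - g) x)) := by
  apply Integrable.mono' (g := fun x => 2 * (V x * |a x| ^ p) +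
      (V x * |f x| ^ p + V x * |g x| ^ p))
  · exact (hia.const_mul 2).add (hif.add hig)
  · exact (((hV.mul (ha.abs.pow measurable_const)).mul ha).mul (hf.sub hg)).aestronglyMeasurable
  · refine Filter.Eventually.of_forall fun x => ?_
    have e : V x * |a x| ^ (p-2) * a x * ((f - g) x) =
        V x * ((|a x| ^ (p-2) * a x) * (f x - g x)) := by
      simp only [Pi.sub_apply]; ring
    rw [Real.norm_eq_abs, e, abs_mul, abs_of_nonneg (hV0 x), abs_mul, abs_phi_full p hp]
    have h3 : |f x - g x| ≤ |f x| + |g x| := abs_sub (f x) (g x)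
    have h4 : |a x| ^ (p-1) * |f x - g x| ≤ (|a x| ^ p + |f x| ^ p) + (|a x| ^ p + |g x| ^ p) := by
      have hy1 := young_abs p hp (a x) (f x)
      have hy2 := young_abs p hp (a x) (g x)
      have hnn : (0:ℝ) ≤ |a x| ^ (p-1) := Real.rpow_nonneg (abs_nonneg _) _
      nlinarith
    calc V x * (|a x| ^ (p-1) * |f x - g x|)
        ≤ V x * ((|a x| ^ p + |f x| ^ p) + (|a x| ^ p + |g x| ^ p)) :=
          mul_le_mul_of_nonneg_left h4 (hV0 x)
      _ = 2 * (V x * |a x| ^ p) + (V x * |f x| ^ p + V x * |g x| ^ p) := by ring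

-- pointwise inequalities for the double-integral part
lemma key_nonneg (hp : 2 ≤ p) (f g : EuclideanSpace ℝ (Fin n) → ℝ)
    (z : EuclideanSpace ℝ (Fin n) × EuclideanSpace ℝ (Fin n)) :
    0 ≤ g1 n s p f (f - g) z - g1 n s p g (f - g) z := by
  set K := ‖z.1 - z.2‖ ^ ((n:ℝ)+s*p) with hK
  have hKnn : 0 ≤ K := Real.rpow_nonneg (norm_nonneg _) _
  set a := f z.1 - f z.2
  set b := g z.1 - g z.2
  have e : g1 n s p f (f - g) z - g1 n s p g (f - g) z =
      ((|a| ^ (p-2) * a - |b| ^ (p-2) * b) * (a - b)) / K := by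
    simp only [g1, Pi.sub_apply, ← hK]
    have ec : f z.1 - g z.1 - (f z.2 - g z.2) = a - b := by ring
    rw [ec]; ring
  rw [e]
  exact div_nonneg (mono_nonneg p hp a b) hKnn

lemma key_pointwise (hp : 2 ≤ p) (f g : EuclideanSpace ℝ (Fin n) → ℝ)
    (z : EuclideanSpace ℝ (Fin n) × EuclideanSpace ℝ (Fin n)) :
    |(f - g) z.1 - (f - g) z.2| ^ p / ‖z.1 - z.2‖ ^ ((n:ℝ)+s*p) ≤
      2 ^ (p-1) * (g1 n s p f (f - g) z - g1 n s p g (f - g) z) := by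
  set K := ‖z.1 - z.2‖ ^ ((n:ℝ)+s*p) with hK
  have hKnn : 0 ≤ K := Real.rpow_nonneg (norm_nonneg _) _
  set a := f z.1 - f z.2
  set b := g z.1 - g z.2
  have e : g1 n s p f (f - g) z - g1 n s p g (f - g) z =
      ((|a| ^ (p-2) * a - |b| ^ (p-2) * b) * (a - b)) / K := by
    simp only [g1, Pi.sub_apply, ← hK]
    have ec : f z.1 - g z.1 - (f z.2 - g z.2) = a - b := by ring
    rw [ec]; ring
  have e2 : (f - g) z.1 - (f - g) z.2 = a - b := by simp only [Pi.sub_apply]; ring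
  rw [e, e2, ← mul_div_assoc]
  exact mydiv (mono_ineq p hp a b) hKnn

-- pointwise inequalities for the potential part
lemma keyV_nonneg (hp : 2 ≤ p) {V : EuclideanSpace ℝ (Fin n) → ℝ} (hV0 : ∀ x, 0 ≤ V x)
    (f g : EuclideanSpace ℝ (Fin n) → ℝ) (x : EuclideanSpace ℝ (Fin n)) :
    0 ≤ V x * |f x| ^ (p-2) * f x * ((f - g) x) - V x * |g x| ^ (p-2) * g x * ((f - g) x) := by
  have e : V x * |f x| ^ (p-2) * f x * ((f - g) x) - V x * |g x| ^ (p-2) * g x * ((f - g) x) =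
      V x * ((|f x| ^ (p-2) * f x - |g x| ^ (p-2) * g x) * (f x - g x)) := by
    simp only [Pi.sub_apply]; ring
  rw [e]
  exact mul_nonneg (hV0 x) (mono_nonneg p hp _ _)

lemma keyV_pointwise (hp : 2 ≤ p) {V : EuclideanSpace ℝ (Fin n) → ℝ} (hV0 : ∀ x, 0 ≤ V x)
    (f g : EuclideanSpace ℝ (Fin n) → ℝ) (x : EuclideanSpace ℝ (Fin n)) :
    V x * |f x - g x| ^ p ≤ 2 ^ (p-1) *
      (V x * |f x| ^ (p-2) * f x * ((f - g) x) - V x * |g x| ^ (p-2) * g x * ((f - g) x)) := by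
  have e : V x * |f x| ^ (p-2) * f x * ((f - g) x) - V x * |g x| ^ (p-2) * g x * ((f - g) x) =
      V x * ((|f x| ^ (p-2) * f x - |g x| ^ (p-2) * g x) * (f x - g x)) := by
    simp only [Pi.sub_apply]; ring
  rw [e]
  have h1 := mono_ineq p hp (f x) (g x)
  calc V x * |f x - g x| ^ p
      ≤ V x * (2 ^ (p-1) * ((|f x| ^ (p-2) * f x - |g x| ^ (p-2) * g x) * (f x - g x))) :=
        mul_le_mul_of_nonneg_left h1 (hV0 x)
    _ = 2 ^ (p-1) * (V x * ((|f x| ^ (p-2) * f x - |g x| ^ (p-2) * g x) * (f x - g x))) := by ring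

end part3

end NormConvAux

/-- convergence of norms from vanishing of `⟨A(u_k) − A(u), u_k − u⟩`. -/
theorem norm_convergence_of_Apair
    (n : ℕ) (s p : ℝ) (V : EuclideanSpace ℝ (Fin n) → ℝ)
    (hn : 1 ≤ n) (hp : 2 ≤ p) (hs0 : 0 < s) (hs1 : s < 1)
    (hVc : Continuous V) (hV0 : ∀ x, 0 ≤ V x)
    (u : ℕ → EuclideanSpace ℝ (Fin n) → ℝ) (w : EuclideanSpace ℝ (Fin n) → ℝ)
    (hu : ∀ k, MemXs n s p V (u k)) (hw : MemXs n s p V w)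
    (h : Tendsto (fun k => Apair n s p V (u k) (u k - w) - Apair n s p V w (u k - w))
      atTop (nhds 0)) :
    Tendsto (fun k => normXs n s p V (u k)) atTop (nhds (normXs n s p V w)) := by
  have hp0 : 0 < p := by linarith
  have hp1 : 1 ≤ p := by linarith
  have hVm : Measurable V := hVc.measurable
  have hwm : Measurable w := hw.1
  have hwg : gagliardoP n s p w ≠ ⊤ := hw.2.2.1.ne
  have hwi : Integrable (fun x => V x * |w x| ^ p) := hw.2.2.2
  have hum : ∀ k, Measurable (u k) := fun k => (hu k).1
  have hug : ∀ k, gagliardoP n s p (u k) ≠ ⊤ := fun k => (hu k).2.2.1.ne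
  have hui : ∀ k, Integrable (fun x => V x * |u k x| ^ p) := fun k => (hu k).2.2.2
  have hc0 : (0:ℝ) ≤ 2 ^ (p-1) := Real.rpow_nonneg (by norm_num) _
  have hvg : ∀ k, gagliardoP n s p (u k - w) ≠ ⊤ := fun k =>
    gag_fin_sub hp1 (hum k) hwm (hug k) hwg
  have hg1u : ∀ k, Integrable (g1 n s p (u k) (u k - w)) (volume.prod volume) := fun k =>
    g1_integrable hp (hum k) ((hum k).sub hwm) (hug k) (hvg k)
  have hg1w : ∀ k, Integrable (g1 n s p w (u k - w)) (volume.prod volume) := fun k =>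
    g1_integrable hp hwm ((hum k).sub hwm) hwg (hvg k)
  have hTu : ∀ k, Integrable (fun x => V x * |u k x| ^ (p-2) * u k x * ((u k - w) x)) := fun k =>
    T_integrable hp hVm hV0 (hum k) (hum k) hwm (hui k) (hui k) hwi
  have hTw : ∀ k, Integrable (fun x => V x * |w x| ^ (p-2) * w x * ((u k - w) x)) := fun k =>
    T_integrable hp hVm hV0 hwm (hum k) hwm hwi (hui k) hwi
  have hdecomp : ∀ k, Apair n s p V (u k) (u k - w) - Apair n s p V w (u k - w)
      = (∫ z, (g1 n s p (u k) (u k - w) z - g1 n s p w (u k - w) z) ∂(volume.prod volume))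
        + ∫ x, (V x * |u k x| ^ (p-2) * u k x * ((u k - w) x)
            - V x * |w x| ^ (p-2) * w x * ((u k - w) x)) := by
    intro k
    rw [Apair, Apair, double_int_eq (hg1u k), double_int_eq (hg1w k),
      integral_sub (hg1u k) (hg1w k), integral_sub (hTu k) (hTw k)]
    ring
  have hPnn : ∀ k, 0 ≤ ∫ z, (g1 n s p (u k) (u k - w) z - g1 n s p w (u k - w) z)
      ∂(volume.prod volume) := fun k => integral_nonneg fun z => key_nonneg hp (u k) w z
  have hQnn : ∀ k, 0 ≤ ∫ x, (V x * |u k x| ^ (p-2) * u k x * ((u k - w) x)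
      - V x * |w x| ^ (p-2) * w x * ((u k - w) x)) := fun k =>
    integral_nonneg fun x => keyV_nonneg hp hV0 (u k) w x
  have hP0 : Tendsto (fun k => ∫ z, (g1 n s p (u k) (u k - w) z - g1 n s p w (u k - w) z)
      ∂(volume.prod volume)) atTop (nhds 0) := by
    refine squeeze_zero hPnn (fun k => ?_) h
    rw [hdecomp k]
    exact le_add_of_nonneg_right (hQnn k)
  have hQ0 : Tendsto (fun k => ∫ x, (V x * |u k x| ^ (p-2) * u k x * ((u k - w) x)
      - V x * |w x| ^ (p-2) * w x * ((u k - w) x))) atTop (nhds 0) := by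
    refine squeeze_zero hQnn (fun k => ?_) h
    rw [hdecomp k]
    exact le_add_of_nonneg_left (hPnn k)
  -- Gagliardo part
  have ew : ∀ (k : ℕ) (z : EuclideanSpace ℝ (Fin n) × EuclideanSpace ℝ (Fin n)),
      (u k z.1 - u k z.2) - (w z.1 - w z.2) = (u k - w) z.1 - (u k - w) z.2 := by
    intro k z; simp only [Pi.sub_apply]; ring
  have hgagbound : ∀ k, gagliardoP n s p (u k - w) ≤ ENNReal.ofReal (2 ^ (p-1)) *
      ENNReal.ofReal (∫ z, (g1 n s p (u k) (u k - w) z - g1 n s p w (u k - w) z)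
        ∂(volume.prod volume)) := by
    intro k
    have hsubint : Integrable (fun z => g1 n s p (u k) (u k - w) z - g1 n s p w (u k - w) z)
        (volume.prod volume) := by exact (hg1u k).sub (hg1w k)
    rw [gag_prod (u := u k - w) ((hum k).sub hwm)]
    calc ∫⁻ z, ENNReal.ofReal (|(u k - w) z.1 - (u k - w) z.2| ^ p /
          ‖z.1 - z.2‖ ^ ((n:ℝ) + s * p)) ∂(volume.prod volume)
        ≤ ∫⁻ z, ENNReal.ofReal (2 ^ (p-1) *
            (g1 n s p (u k) (u k - w) z - g1 n s p w (u k - w) z)) ∂(volume.prod volume) :=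
          lintegral_mono fun z => ENNReal.ofReal_le_ofReal (key_pointwise hp (u k) w z)
      _ = ∫⁻ z, ENNReal.ofReal (2 ^ (p-1)) *
            ENNReal.ofReal (g1 n s p (u k) (u k - w) z - g1 n s p w (u k - w) z)
            ∂(volume.prod volume) :=
          lintegral_congr fun z => ENNReal.ofReal_mul hc0
      _ = ENNReal.ofReal (2 ^ (p-1)) * ∫⁻ z, ENNReal.ofReal
            (g1 n s p (u k) (u k - w) z - g1 n s p w (u k - w) z) ∂(volume.prod volume) :=
          lintegral_const_mul' _ _ ENNReal.ofReal_ne_top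
      _ = ENNReal.ofReal (2 ^ (p-1)) * ENNReal.ofReal (∫ z, (g1 n s p (u k) (u k - w) z
            - g1 n s p w (u k - w) z) ∂(volume.prod volume)) := by
          rw [ofReal_integral_eq_lintegral_ofReal hsubint
            (Filter.Eventually.of_forall fun z => key_nonneg hp (u k) w z)]
  have hgdiff : Tendsto (fun k => ∫⁻ z, ((‖(u k z.1 - u k z.2) - (w z.1 - w z.2)‖₊ : ℝ≥0∞)) ^ p
      ∂(muG n s p)) atTop (nhds 0) := by
    have hlim : Tendsto (fun k => ENNReal.ofReal (2 ^ (p-1)) * ENNReal.ofReal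
        (∫ z, (g1 n s p (u k) (u k - w) z - g1 n s p w (u k - w) z) ∂(volume.prod volume)))
        atTop (nhds 0) := by
      have h1 : Tendsto (fun k => ENNReal.ofReal (∫ z, (g1 n s p (u k) (u k - w) z
          - g1 n s p w (u k - w) z) ∂(volume.prod volume))) atTop (nhds 0) := by
        simpa using ENNReal.tendsto_ofReal hP0
      have h2 := ENNReal.Tendsto.const_mul h1 (Or.inr (ENNReal.ofReal_ne_top
        (r := 2 ^ (p-1))))
      simpa using h2
    refine tendsto_of_tendsto_of_tendsto_of_le_of_le tendsto_const_nhds hlim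
      (fun k => zero_le) (fun k => ?_)
    have e1 : (∫⁻ z, ((‖(u k z.1 - u k z.2) - (w z.1 - w z.2)‖₊ : ℝ≥0∞)) ^ p ∂(muG n s p))
        = gagliardoP n s p (u k - w) := by
      simp only [ew]
      exact (gag_repr hp0 ((hum k).sub hwm)).symm
    rw [e1]
    exact hgagbound k
  have hmuGfinu : ∀ k, (∫⁻ z, ((‖u k z.1 - u k z.2‖₊ : ℝ≥0∞)) ^ p ∂(muG n s p)) ≠ ⊤ := by
    intro k; rw [← gag_repr hp0 (hum k)]; exact hug k
  have hmuGfinw : (∫⁻ z, ((‖w z.1 - w z.2‖₊ : ℝ≥0∞)) ^ p ∂(muG n s p)) ≠ ⊤ := by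
    rw [← gag_repr hp0 hwm]; exact hwg
  have hgagconv : Tendsto (fun k => (gagliardoP n s p (u k)).toReal) atTop
      (nhds (gagliardoP n s p w).toReal) := by
    have hmain := lp_tendsto (muG n s p) p hp1 (fun k z => u k z.1 - u k z.2)
      (fun z => w z.1 - w z.2) (fun k => measurable_pair_sub (hum k))
      (measurable_pair_sub hwm) hmuGfinu hmuGfinw hgdiff
    have e2 : ∀ k, (∫⁻ z, ((‖u k z.1 - u k z.2‖₊ : ℝ≥0∞)) ^ p ∂(muG n s p))
        = gagliardoP n s p (u k) := fun k => (gag_repr hp0 (hum k)).symm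
    have e3 : (∫⁻ z, ((‖w z.1 - w z.2‖₊ : ℝ≥0∞)) ^ p ∂(muG n s p)) = gagliardoP n s p w :=
      (gag_repr hp0 hwm).symm
    simpa only [e2, e3] using hmain
  -- potential part
  have hnuVrepr : ∀ f : EuclideanSpace ℝ (Fin n) → ℝ, Measurable f →
      Integrable (fun x => V x * |f x| ^ p) →
      (∫⁻ x, ((‖f x‖₊ : ℝ≥0∞)) ^ p ∂(nuV n V)) = ENNReal.ofReal (∫ x, V x * |f x| ^ p) := by
    intro f hf hif
    rw [nuV_repr hp0 hVm hV0 hf, ← ofReal_integral_eq_lintegral_ofReal hif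
      (Filter.Eventually.of_forall fun x => mul_nonneg (hV0 x)
        (Real.rpow_nonneg (abs_nonneg _) _))]
  have hVdiffbound : ∀ k, (∫⁻ x, ((‖u k x - w x‖₊ : ℝ≥0∞)) ^ p ∂(nuV n V)) ≤
      ENNReal.ofReal (2 ^ (p-1)) * ENNReal.ofReal (∫ x, (V x * |u k x| ^ (p-2) * u k x *
        ((u k - w) x) - V x * |w x| ^ (p-2) * w x * ((u k - w) x))) := by
    intro k
    have hsubint : Integrable (fun x => V x * |u k x| ^ (p-2) * u k x * ((u k - w) x)
        - V x * |w x| ^ (p-2) * w x * ((u k - w) x)) := by exact (hTu k).sub (hTw k)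
    rw [nuV_repr (u := fun x => u k x - w x) hp0 hVm hV0 ((hum k).sub hwm)]
    calc ∫⁻ x, ENNReal.ofReal (V x * |u k x - w x| ^ p)
        ≤ ∫⁻ x, ENNReal.ofReal (2 ^ (p-1) * (V x * |u k x| ^ (p-2) * u k x * ((u k - w) x)
            - V x * |w x| ^ (p-2) * w x * ((u k - w) x))) := by
          refine lintegral_mono fun x => ENNReal.ofReal_le_ofReal ?_
          have := keyV_pointwise hp hV0 (u k) w x
          linarith [this]
      _ = ∫⁻ x, ENNReal.ofReal (2 ^ (p-1)) * ENNReal.ofReal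
            ((V x * |u k x| ^ (p-2) * u k x * ((u k - w) x)
              - V x * |w x| ^ (p-2) * w x * ((u k - w) x))) := by
          refine lintegral_congr fun x => ?_
          rw [← ENNReal.ofReal_mul hc0, mul_sub]
      _ = ENNReal.ofReal (2 ^ (p-1)) * ∫⁻ x, ENNReal.ofReal
            ((V x * |u k x| ^ (p-2) * u k x * ((u k - w) x)
              - V x * |w x| ^ (p-2) * w x * ((u k - w) x))) :=
          lintegral_const_mul' _ _ ENNReal.ofReal_ne_top
      _ = ENNReal.ofReal (2 ^ (p-1)) * ENNReal.ofReal (∫ x,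
            (V x * |u k x| ^ (p-2) * u k x * ((u k - w) x)
              - V x * |w x| ^ (p-2) * w x * ((u k - w) x))) := by
          rw [ofReal_integral_eq_lintegral_ofReal hsubint
            (Filter.Eventually.of_forall fun x => keyV_nonneg hp hV0 (u k) w x)]
  have hVdiff : Tendsto (fun k => ∫⁻ x, ((‖u k x - w x‖₊ : ℝ≥0∞)) ^ p ∂(nuV n V))
      atTop (nhds 0) := by
    have hlim : Tendsto (fun k => ENNReal.ofReal (2 ^ (p-1)) * ENNReal.ofReal
        (∫ x, (V x * |u k x| ^ (p-2) * u k x * ((u k - w) x)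
          - V x * |w x| ^ (p-2) * w x * ((u k - w) x)))) atTop (nhds 0) := by
      have h1 := ENNReal.tendsto_ofReal hQ0
      have h2 := ENNReal.Tendsto.const_mul (by simpa using h1 :
        Tendsto (fun k => ENNReal.ofReal (∫ x, (V x * |u k x| ^ (p-2) * u k x * ((u k - w) x)
          - V x * |w x| ^ (p-2) * w x * ((u k - w) x)))) atTop (nhds 0))
        (Or.inr (ENNReal.ofReal_ne_top (r := 2 ^ (p-1))))
      simpa using h2
    exact tendsto_of_tendsto_of_tendsto_of_le_of_le tendsto_const_nhds hlim
      (fun k => zero_le) hVdiffbound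
  have hnuVfinu : ∀ k, (∫⁻ x, ((‖u k x‖₊ : ℝ≥0∞)) ^ p ∂(nuV n V)) ≠ ⊤ := fun k => by
    rw [hnuVrepr (u k) (hum k) (hui k)]; exact ENNReal.ofReal_ne_top
  have hnuVfinw : (∫⁻ x, ((‖w x‖₊ : ℝ≥0∞)) ^ p ∂(nuV n V)) ≠ ⊤ := by
    rw [hnuVrepr w hwm hwi]; exact ENNReal.ofReal_ne_top
  have hVconv : Tendsto (fun k => ∫ x, V x * |u k x| ^ p) atTop
      (nhds (∫ x, V x * |w x| ^ p)) := by
    have hmain := lp_tendsto (nuV n V) p hp1 u w hum hwm hnuVfinu hnuVfinw hVdiff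
    have e2 : ∀ k, (∫⁻ x, ((‖u k x‖₊ : ℝ≥0∞)) ^ p ∂(nuV n V)).toReal
        = ∫ x, V x * |u k x| ^ p := fun k => by
      rw [hnuVrepr (u k) (hum k) (hui k), ENNReal.toReal_ofReal
        (integral_nonneg fun x => mul_nonneg (hV0 x) (Real.rpow_nonneg (abs_nonneg _) _))]
    have e3 : (∫⁻ x, ((‖w x‖₊ : ℝ≥0∞)) ^ p ∂(nuV n V)).toReal = ∫ x, V x * |w x| ^ p := by
      rw [hnuVrepr w hwm hwi, ENNReal.toReal_ofReal
        (integral_nonneg fun x => mul_nonneg (hV0 x) (Real.rpow_nonneg (abs_nonneg _) _))]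
    simpa only [e2, e3] using hmain
  have hsum := hgagconv.add hVconv
  simp only [normXs]
  exact hsum.rpow_const (Or.inr (by positivity))
end
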